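/- arXiv:1606.08048 — 8 statements merged into one kernel-verified Lean document; each statement's English description precedes it below -/
import Mathlib

section
/- Let X be a Banach space, X_1,...,X_n complemented subspaces with projections P_1,...,P_n satisfying P_i|_{X_j} = 0 whenever i > j. Then X_1 + ... + X_n is complemented in X, and I - (I - P_1)(I - P_2)...(I - P_n) is a projection onto X_1 + ... + X_n. -/
/-- If `P i` are continuous linear projections onto subspaces `Xs i` of a Banach space with
`P i` vanishing on `Xs j` whenever `i > j`, then `I - (I - P 1)...(I - P n)` is a continuous
linear projection onto `X₁ + ... + Xₙ`, which is therefore complemented. -/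
theorem sum_proj_of_triangular {𝕜 : Type*} [RCLike 𝕜] {X : Type*} [NormedAddCommGroup X]
    [NormedSpace 𝕜 X] [CompleteSpace X] {n : ℕ}
    (Xs : Fin n → Submodule 𝕜 X) (P : Fin n → X →L[𝕜] X)
    (hidem : ∀ i, ∀ x, P i (P i x) = P i x)
    (hrange : ∀ i, LinearMap.range (P i : X →ₗ[𝕜] X) = Xs i)
    (hzero : ∀ i j, j < i → ∀ x ∈ Xs j, P i x = 0) :
    (∀ x, (1 - (List.ofFn fun i => (1 : X →L[𝕜] X) - P i).prod)
        ((1 - (List.ofFn fun i => (1 : X →L[𝕜] X) - P i).prod) x) =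
        (1 - (List.ofFn fun i => (1 : X →L[𝕜] X) - P i).prod) x) ∧
      LinearMap.range ((1 - (List.ofFn fun i => (1 : X →L[𝕜] X) - P i).prod : X →L[𝕜] X) : X →ₗ[𝕜] X) = (⨆ i, Xs i) ∧
      (⨆ i, Xs i).ClosedComplemented := by
  have hmemXs : ∀ (i : Fin n) (x : X), P i x ∈ Xs i := fun i x =>
    (hrange i) ▸ LinearMap.mem_range_self _ x
  set Q : X →L[𝕜] X := (List.ofFn fun i => (1 : X →L[𝕜] X) - P i).prod with hQdef
  have hQ : Q = ((List.finRange n).map fun i => (1 : X →L[𝕜] X) - P i).prod := by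
    rw [hQdef, List.ofFn_eq_map]
  -- key1 : P j kills the product, when j in sorted list l
  have key1 : ∀ (l : List (Fin n)), l.Pairwise (· < ·) → ∀ j ∈ l, ∀ x,
      P j (((l.map fun i => (1 : X →L[𝕜] X) - P i).prod) x) = 0 := by
    intro l
    induction l with
    | nil => simp
    | cons a t ih =>
      intro hs j hj x
      obtain ⟨h1, h2⟩ := List.pairwise_cons.mp hs
      simp only [List.map_cons, List.prod_cons, ContinuousLinearMap.mul_apply,
        ContinuousLinearMap.sub_apply, ContinuousLinearMap.one_apply, map_sub]
      rcases List.mem_cons.mp hj with rfl | hj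
      · rw [hidem, sub_self]
      · rw [hzero j a (h1 j hj) _ (hmemXs a _), ih h2 j hj x, sub_zero]
  have hPQ : ∀ (j : Fin n) (x : X), P j (Q x) = 0 := by
    intro j x
    rw [hQ]
    exact key1 _ (List.pairwise_lt_finRange n) j (List.mem_finRange j) x
  -- Q is fixed by any left product
  have key2 : ∀ (l : List (Fin n)) (x : X),
      ((l.map fun i => (1 : X →L[𝕜] X) - P i).prod) (Q x) = Q x := by
    intro l x
    induction l with
    | nil => simp
    | cons a t ih =>
      simp only [List.map_cons, List.prod_cons, ContinuousLinearMap.mul_apply, ih,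
        ContinuousLinearMap.sub_apply, ContinuousLinearMap.one_apply, hPQ, sub_zero]
  have hQQ : ∀ x, Q (Q x) = Q x := by
    intro x; nth_rewrite 1 [hQ]; exact key2 _ x
  -- (1 - prod) lands in the sup
  have keyL : ∀ (l : List (Fin n)) (x : X),
      x - ((l.map fun i => (1 : X →L[𝕜] X) - P i).prod) x ∈ ⨆ i, Xs i := by
    intro l
    induction l with
    | nil => simp
    | cons a t ih =>
      intro x
      have : x - ((((a :: t).map fun i => (1 : X →L[𝕜] X) - P i).prod) x) =
          (x - ((t.map fun i => (1 : X →L[𝕜] X) - P i).prod) x) +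
          P a (((t.map fun i => (1 : X →L[𝕜] X) - P i).prod) x) := by
        simp only [List.map_cons, List.prod_cons, ContinuousLinearMap.mul_apply,
          ContinuousLinearMap.sub_apply, ContinuousLinearMap.one_apply]
        abel
      rw [this]
      exact Submodule.add_mem _ (ih x) (Submodule.mem_iSup_of_mem a (hmemXs a _))
  have hTmem : ∀ x, (1 - Q) x ∈ ⨆ i, Xs i := by
    intro x
    have := keyL (List.finRange n) x
    rw [← hQ] at this
    simpa [ContinuousLinearMap.sub_apply] using this
  -- products fix x killed by all P j in l
  have keyId : ∀ (l : List (Fin n)) (x : X), (∀ j ∈ l, P j x = 0) →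
      ((l.map fun i => (1 : X →L[𝕜] X) - P i).prod) x = x := by
    intro l
    induction l with
    | nil => simp
    | cons a t ih =>
      intro x h
      simp only [List.map_cons, List.prod_cons, ContinuousLinearMap.mul_apply,
        ih x (fun j hj => h j (List.mem_cons_of_mem a hj)),
        ContinuousLinearMap.sub_apply, ContinuousLinearMap.one_apply,
        ContinuousLinearMap.sub_apply, ContinuousLinearMap.one_apply]
      rw [h a (List.mem_cons_self), sub_zero]
  have keyZ : ∀ (l : List (Fin n)), l.Pairwise (· < ·) → ∀ i ∈ l, ∀ x ∈ Xs i,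
      ((l.map fun i => (1 : X →L[𝕜] X) - P i).prod) x = 0 := by
    intro l
    induction l with
    | nil => simp
    | cons a t ih =>
      intro hs i hi x hx
      obtain ⟨h1, h2⟩ := List.pairwise_cons.mp hs
      simp only [List.map_cons, List.prod_cons, ContinuousLinearMap.mul_apply]
      rcases List.mem_cons.mp hi with rfl | hi
      · have hfix : ((t.map fun i => (1 : X →L[𝕜] X) - P i).prod) x = x :=
          keyId t x (fun j hj => hzero j i (h1 j hj) x hx)
        have hPx : P i x = x := by
          obtain ⟨y, rfl⟩ := (hrange i ▸ hx : x ∈ LinearMap.range (P i : X →ₗ[𝕜] X))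
          exact hidem i y
        rw [hfix]
        simp [hPx]
      · rw [ih h2 i hi x hx, map_zero]
  have hQzero : ∀ (i : Fin n), ∀ x ∈ Xs i, Q x = 0 := by
    intro i x hx
    rw [hQ]
    exact keyZ _ (List.pairwise_lt_finRange n) i (List.mem_finRange i) x hx
  have hTfix : ∀ x ∈ ⨆ i, Xs i, (1 - Q) x = x := by
    intro x hx
    refine Submodule.iSup_induction Xs (motive := fun x => (1 - Q) x = x) hx ?_ ?_ ?_
    · intro i x hx
      simp [ContinuousLinearMap.sub_apply, hQzero i x hx]
    · simp
    · intro x y hx hy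
      simp only [map_add, hx, hy]
  refine ⟨?_, ?_, ?_⟩
  · intro x
    exact hTfix _ (hTmem x)
  · ext x
    constructor
    · rintro ⟨y, rfl⟩
      exact hTmem y
    · intro hx
      exact ⟨x, hTfix x hx⟩
  · refine ⟨ContinuousLinearMap.codRestrict (1 - Q) _ hTmem, ?_⟩
    rintro ⟨x, hx⟩
    ext
    simpa using hTfix x hx
end

section
/- Let X be a Banach space, P_1,...,P_n continuous linear projections onto subspaces X_1,...,X_n, and let ε_{ij} ≥ 0 satisfy ‖P_i x‖ ≤ ε_{ij}‖x‖ for all x ∈ X_j whenever i ≠ j. Form the n×n matrix E with zero diagonal and off-diagonal entries ε_{ij}. If the spectral radius of E is strictly less than 1, then X_1 + ... + X_n is complemented in X, and ker(P_1) ∩ ... ∩ ker(P_n) is a complement of X_1 + ... + X_n in X. -/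
attribute [local instance] Matrix.linftyOpNormedAddCommGroup Matrix.linftyOpNormedSpace
  Matrix.linftyOpNormedRing Matrix.linftyOpNormedAlgebra

open Finset
open scoped ENNReal NNReal

/-- The spectral radius of a real matrix is `< c` iff every complex eigenvalue has norm `< c`. -/
def SpecRadLT {n : ℕ} (E : Matrix (Fin n) (Fin n) ℝ) (c : ℝ) : Prop :=
  ∀ z ∈ spectrum ℂ (E.map (Complex.ofReal · : ℝ → ℂ)), ‖z‖ < c

/-- In a complete normed ring, if some power of `a` has norm `< 1` then `1 - a` is a unit. -/
lemma aux_isUnit_one_sub {R : Type*} [NormedRing R] [CompleteSpace R] (a : R) (k : ℕ)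
    (h : ‖a ^ k‖ < 1) : IsUnit (1 - a) := by
  obtain ⟨u, hu⟩ : IsUnit (1 - a ^ k) := ⟨Units.oneSub _ h, rfl⟩
  set b : R := ∑ i ∈ Finset.range k, a ^ i with hb
  have h1 : (1 - a) * b = 1 - a ^ k := by
    have := mul_geom_sum a k
    rw [← neg_sub a 1, neg_mul, this, neg_sub]
  have h2 : b * (1 - a) = 1 - a ^ k := by
    have := geom_sum_mul a k
    rw [← neg_sub a 1, mul_neg, this, neg_sub]
  have hr : (1 - a) * (b * ↑u⁻¹) = 1 := by
    rw [← mul_assoc, h1, ← hu, u.mul_inv]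
  have hl : (↑u⁻¹ * b) * (1 - a) = 1 := by
    rw [mul_assoc, h2, ← hu, u.inv_mul]
  have heq : (↑u⁻¹ * b : R) = b * ↑u⁻¹ := by
    calc (↑u⁻¹ * b : R) = (↑u⁻¹ * b) * ((1 - a) * (b * ↑u⁻¹)) := by rw [hr, mul_one]
    _ = ((↑u⁻¹ * b) * (1 - a)) * (b * ↑u⁻¹) := by noncomm_ring
    _ = b * ↑u⁻¹ := by rw [hl, one_mul]
  exact ⟨⟨1 - a, b * ↑u⁻¹, hr, by rw [← heq, hl]⟩, rfl⟩

/-- If `P i` are continuous linear projections onto subspaces `Xs i` with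
`‖P i x‖ ≤ ε i j * ‖x‖` for `x ∈ Xs j` (`i ≠ j`), and the matrix `E` with zero diagonal and
entries `ε i j` off the diagonal has spectral radius `< 1`, then `X₁ + ... + Xₙ` is
complemented and `ker P₁ ∩ ... ∩ ker Pₙ` is a complement of it. -/
theorem sum_complemented_of_spectralRadius_lt_one {𝕜 : Type*} [RCLike 𝕜] {X : Type*}
    [NormedAddCommGroup X] [NormedSpace 𝕜 X] [CompleteSpace X] {n : ℕ}
    (Xs : Fin n → Submodule 𝕜 X) (P : Fin n → X →L[𝕜] X)
    (hidem : ∀ i, ∀ x, P i (P i x) = P i x)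
    (hrange : ∀ i, LinearMap.range (P i : X →ₗ[𝕜] X) = Xs i)
    (ε : Fin n → Fin n → ℝ) (hε : ∀ i j, 0 ≤ ε i j)
    (hbound : ∀ i j, i ≠ j → ∀ x ∈ Xs j, ‖P i x‖ ≤ ε i j * ‖x‖)
    (E : Matrix (Fin n) (Fin n) ℝ)
    (hEdef : ∀ i j, E i j = if i = j then 0 else ε i j)
    (hr : SpecRadLT E 1) :
    (⨆ i, Xs i).ClosedComplemented ∧
      IsCompl (⨆ i, Xs i) (⨅ i, LinearMap.ker (P i : X →ₗ[𝕜] X)) := by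
  classical
  -- basic facts about the projections
  have hmemXs : ∀ i (x : X), P i x ∈ Xs i := fun i x => (hrange i) ▸ ⟨x, rfl⟩
  have hfix : ∀ i (w : X), w ∈ Xs i → P i w = w := by
    intro i w hw
    rw [← hrange i] at hw
    obtain ⟨z, rfl⟩ := hw
    exact hidem i z
  -- the subspaces are closed, hence complete
  have hclosed : ∀ i, IsClosed ((Xs i : Set X)) := by
    intro i
    have hxs : Xs i = LinearMap.ker ((ContinuousLinearMap.id 𝕜 X - P i : X →L[𝕜] X) : X →ₗ[𝕜] X) := by
      ext x
      simp only [LinearMap.mem_ker, ContinuousLinearMap.coe_coe, ContinuousLinearMap.coe_sub', Pi.sub_apply,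
        ContinuousLinearMap.coe_id', id_eq, sub_eq_zero]
      constructor
      · intro hx; exact (hfix i x hx).symm
      · intro hx; rw [hx]; exact hmemXs i x
    rw [hxs]
    exact ContinuousLinearMap.isClosed_ker (ContinuousLinearMap.id 𝕜 X - P i)
  haveI : ∀ i, CompleteSpace (Xs i) := fun i => (hclosed i).completeSpace_coe
  -- entries of E are nonneg, hence powers of E have nonneg entries
  have hEnn : ∀ i j, 0 ≤ E i j := by
    intro i j; rw [hEdef]; split <;> [rfl; exact hε i j]
  have hpownn : ∀ m i j, 0 ≤ (E ^ m) i j := by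
    intro m
    induction m with
    | zero => intro i j; rw [pow_zero]; by_cases h : i = j <;>
        simp [Matrix.one_apply, h]
    | succ m ih =>
      intro i j
      rw [pow_succ, Matrix.mul_apply]
      exact Finset.sum_nonneg fun l _ => mul_nonneg (ih i l) (hEnn l j)
  -- spectral radius bound: get k with small row sums of E ^ k
  set A : Matrix (Fin n) (Fin n) ℂ := E.map (Complex.ofReal · : ℝ → ℂ) with hA
  have hρ : spectralRadius ℂ A < 1 := by
    rcases Set.eq_empty_or_nonempty (spectrum ℂ A) with h | h
    · have h0 : spectralRadius ℂ A = 0 := by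
        unfold spectralRadius
        rw [h]
        simp
      rw [h0]
      exact zero_lt_one
    · obtain ⟨z, hz, hz2⟩ := spectrum.exists_nnnorm_eq_spectralRadius_of_nonempty h
      rw [← hz2]
      have hlt := hr z hz
      rw [show ((1 : ℝ≥0∞)) = ((1 : NNReal) : ℝ≥0∞) by simp]
      rw [ENNReal.coe_lt_coe]
      rw [← NNReal.coe_lt_coe]
      simpa using hlt
  obtain ⟨k, hk1, hkA⟩ : ∃ k : ℕ, 1 ≤ k ∧ (‖A ^ k‖₊ : ℝ≥0∞) ^ (1 / (k : ℝ)) < 1 := by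
    have := (spectrum.pow_nnnorm_pow_one_div_tendsto_nhds_spectralRadius A).eventually_lt_const hρ
    exact ((Filter.eventually_ge_atTop 1).and this).exists.imp fun k h => ⟨h.1, h.2⟩
  have hAk : ‖A ^ k‖ < 1 := by
    have hnn : (‖A ^ k‖₊ : ℝ≥0∞) < 1 := by
      by_contra hcon
      push_neg at hcon
      have h1 : (1 : ℝ≥0∞) ≤ (‖A ^ k‖₊ : ℝ≥0∞) ^ (1 / (k : ℝ)) := by
        calc (1 : ℝ≥0∞) = (1 : ℝ≥0∞) ^ (1 / (k : ℝ)) := (ENNReal.one_rpow _).symm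
        _ ≤ (‖A ^ k‖₊ : ℝ≥0∞) ^ (1 / (k : ℝ)) :=
          ENNReal.rpow_le_rpow hcon (by positivity)
      exact absurd hkA (not_lt.mpr h1)
    have : ‖A ^ k‖₊ < 1 := by exact_mod_cast hnn
    exact_mod_cast this
  set c : ℝ := ‖A ^ k‖ with hc
  have hc0 : 0 ≤ c := norm_nonneg _
  have hc1 : c < 1 := hAk
  have hmap : A ^ k = (E ^ k).map (Complex.ofReal · : ℝ → ℂ) := by
    have : A = Complex.ofRealHom.mapMatrix E := rfl
    rw [this, ← map_pow]
    rfl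
  have hrow : ∀ i, ∑ j, (E ^ k) i j ≤ c := by
    intro i
    have h1 : (∑ j, ‖(A ^ k) i j‖₊) ≤ ‖A ^ k‖₊ := by
      rw [Matrix.linfty_opNNNorm_def]
      exact Finset.le_sup (f := fun i => ∑ j, ‖(A ^ k) i j‖₊) (Finset.mem_univ i)
    have h2 : ∑ j, ‖(A ^ k) i j‖ ≤ c := by
      have := NNReal.coe_le_coe.mpr h1
      rwa [NNReal.coe_sum] at this
    calc ∑ j, (E ^ k) i j = ∑ j, ‖(A ^ k) i j‖ := by
          refine Finset.sum_congr rfl fun j _ => ?_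
          rw [hmap, Matrix.map_apply, Complex.norm_real, Real.norm_eq_abs, abs_of_nonneg (hpownn k i j)]
    _ ≤ c := h2
  -- construct the operator M on (∀ i, ↥(Xs i))
  set Acl : ∀ i j : Fin n, (∀ i, ↥(Xs i)) →L[𝕜] ↥(Xs i) := fun i j =>
    ((P i).comp ((Xs j).subtypeL.comp (ContinuousLinearMap.proj j))).codRestrict (Xs i)
      (fun y => hmemXs i _) with hAcl
  set M : (∀ i, ↥(Xs i)) →L[𝕜] (∀ i, ↥(Xs i)) :=
    ContinuousLinearMap.pi (fun i => ∑ j ∈ Finset.univ.erase i, Acl i j) with hM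
  have hMapp : ∀ (y : (∀ i, ↥(Xs i))) i, ((M y i : X)) = ∑ j ∈ Finset.univ.erase i, P i (y j) := by
    intro y i
    rw [hM, ContinuousLinearMap.pi_apply, ContinuousLinearMap.sum_apply]
    rw [AddSubmonoidClass.coe_finset_sum]
    rfl
  -- one-step norm bound
  have hMstep : ∀ (y : (∀ i, ↥(Xs i))) i, ‖M y i‖ ≤ ∑ j, E i j * ‖y j‖ := by
    intro y i
    have : ‖M y i‖ = ‖((M y i : X))‖ := rfl
    rw [this, hMapp]
    calc ‖∑ j ∈ Finset.univ.erase i, P i (y j : X)‖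
        ≤ ∑ j ∈ Finset.univ.erase i, ‖P i (y j : X)‖ := norm_sum_le _ _
    _ ≤ ∑ j ∈ Finset.univ.erase i, E i j * ‖y j‖ := by
        refine Finset.sum_le_sum fun j hj => ?_
        have hji : i ≠ j := (Finset.ne_of_mem_erase hj).symm
        rw [hEdef, if_neg hji]
        exact hbound i j hji _ (y j).2
    _ ≤ ∑ j, E i j * ‖y j‖ := by
        refine Finset.sum_le_sum_of_subset_of_nonneg (Finset.erase_subset _ _)
          fun j _ _ => mul_nonneg (hEnn i j) (norm_nonneg _)
  -- iterated norm bound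
  have hMk : ∀ (m : ℕ) (y : (∀ i, ↥(Xs i))) i, ‖(M ^ m) y i‖ ≤ ∑ j, (E ^ m) i j * ‖y j‖ := by
    intro m
    induction m with
    | zero =>
      intro y i
      rw [pow_zero, ContinuousLinearMap.one_apply, pow_zero]
      have : ∑ j, (1 : Matrix (Fin n) (Fin n) ℝ) i j * ‖y j‖ = ‖y i‖ := by
        rw [Finset.sum_eq_single i]
        · simp [Matrix.one_apply]
        · intro j _ hji
          simp [Matrix.one_apply, (Ne.symm hji)]
        · simp
      rw [this]
    | succ m ih =>
      intro y i
      have hpowapp : (M ^ (m + 1)) y = (M ^ m) (M y) := by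
        rw [pow_succ, ContinuousLinearMap.mul_apply]
      rw [hpowapp]
      calc ‖(M ^ m) (M y) i‖ ≤ ∑ j, (E ^ m) i j * ‖M y j‖ := ih (M y) i
      _ ≤ ∑ j, (E ^ m) i j * (∑ l, E j l * ‖y l‖) := by
          refine Finset.sum_le_sum fun j _ => ?_
          exact mul_le_mul_of_nonneg_left (hMstep y j) (hpownn m i j)
      _ = ∑ l, (E ^ (m + 1)) i l * ‖y l‖ := by
          rw [pow_succ]
          simp_rw [Finset.mul_sum, Matrix.mul_apply, Finset.sum_mul, mul_assoc]
          exact Finset.sum_comm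
  -- operator norm bound for M ^ k
  have hMknorm : ‖M ^ k‖ < 1 := by
    have hle : ‖M ^ k‖ ≤ c := by
      refine ContinuousLinearMap.opNorm_le_bound _ hc0 fun y => ?_
      rw [show ((M ^ k) y : (∀ i, ↥(Xs i))) = fun i => (M ^ k) y i from rfl]
      refine (pi_norm_le_iff_of_nonneg (mul_nonneg hc0 (norm_nonneg y))).mpr fun i => ?_
      calc ‖(M ^ k) y i‖ ≤ ∑ j, (E ^ k) i j * ‖y j‖ := hMk k y i
      _ ≤ ∑ j, (E ^ k) i j * ‖y‖ := by
          refine Finset.sum_le_sum fun j _ => ?_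
          exact mul_le_mul_of_nonneg_left (norm_le_pi_norm y j) (hpownn k i j)
      _ = (∑ j, (E ^ k) i j) * ‖y‖ := (Finset.sum_mul _ _ _).symm
      _ ≤ c * ‖y‖ := mul_le_mul_of_nonneg_right (hrow i) (norm_nonneg y)
    exact lt_of_le_of_lt hle hc1
  -- 1 + M is invertible
  have hunit : IsUnit ((1 : (∀ i, ↥(Xs i)) →L[𝕜] (∀ i, ↥(Xs i))) + M) := by
    have hneg : ‖(-M) ^ k‖ < 1 := by
      rcases Nat.even_or_odd k with hp | hp
      · exact lt_of_le_of_lt (le_of_eq (congrArg Norm.norm (hp.neg_pow M))) hMknorm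
      · exact lt_of_le_of_lt
          (le_of_eq ((congrArg Norm.norm (hp.neg_pow M)).trans (norm_neg (M ^ k)))) hMknorm
    have := aux_isUnit_one_sub (-M) k hneg
    rwa [sub_neg_eq_add] at this
  obtain ⟨u, hu⟩ := hunit
  have hNR : ∀ z : (∀ i, ↥(Xs i)), ((1 : (∀ i, ↥(Xs i)) →L[𝕜] (∀ i, ↥(Xs i))) + M) ((↑u⁻¹ : (∀ i, ↥(Xs i)) →L[𝕜] (∀ i, ↥(Xs i))) z) = z := by
    intro z
    calc ((1 : (∀ i, ↥(Xs i)) →L[𝕜] (∀ i, ↥(Xs i))) + M) ((↑u⁻¹ : (∀ i, ↥(Xs i)) →L[𝕜] (∀ i, ↥(Xs i))) z)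
        = (((1 : (∀ i, ↥(Xs i)) →L[𝕜] (∀ i, ↥(Xs i))) + M) * (↑u⁻¹ : (∀ i, ↥(Xs i)) →L[𝕜] (∀ i, ↥(Xs i)))) z := rfl
    _ = ((↑u * ↑u⁻¹ : (∀ i, ↥(Xs i)) →L[𝕜] (∀ i, ↥(Xs i)))) z := by rw [hu]
    _ = z := by rw [u.mul_inv]; rfl
  have hRN : ∀ z : (∀ i, ↥(Xs i)), (↑u⁻¹ : (∀ i, ↥(Xs i)) →L[𝕜] (∀ i, ↥(Xs i))) (((1 : (∀ i, ↥(Xs i)) →L[𝕜] (∀ i, ↥(Xs i))) + M) z) = z := by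
    intro z
    calc (↑u⁻¹ : (∀ i, ↥(Xs i)) →L[𝕜] (∀ i, ↥(Xs i))) (((1 : (∀ i, ↥(Xs i)) →L[𝕜] (∀ i, ↥(Xs i))) + M) z)
        = (((↑u⁻¹ : (∀ i, ↥(Xs i)) →L[𝕜] (∀ i, ↥(Xs i)))) * ((1 : (∀ i, ↥(Xs i)) →L[𝕜] (∀ i, ↥(Xs i))) + M)) z := rfl
    _ = ((↑u⁻¹ * ↑u : (∀ i, ↥(Xs i)) →L[𝕜] (∀ i, ↥(Xs i)))) z := by rw [hu]
    _ = z := by rw [u.inv_mul]; rfl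
  -- the sum map S and the vector map v
  set S : (∀ i, ↥(Xs i)) →L[𝕜] X := ∑ i, (Xs i).subtypeL.comp (ContinuousLinearMap.proj i) with hS
  have hSapp : ∀ y : (∀ i, ↥(Xs i)), S y = ∑ i, ((y i : X)) := by
    intro y
    rw [hS, ContinuousLinearMap.sum_apply]
    rfl
  set v : X →L[𝕜] (∀ i, ↥(Xs i)) := ContinuousLinearMap.pi
    (fun i => (P i).codRestrict (Xs i) (fun x => hmemXs i x)) with hv
  have hvapp : ∀ (x : X) i, ((v x i : X)) = P i x := fun x i => rfl
  -- key identity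
  have hkey : ∀ (f : (∀ i, ↥(Xs i))) (i), P i (S f) = ((((1 : (∀ i, ↥(Xs i)) →L[𝕜] (∀ i, ↥(Xs i))) + M) f) i : X) := by
    intro f i
    have hl : P i (S f) = ∑ j, P i ((f j : X)) := by rw [hSapp, map_sum]
    have hre : (((((1 : (∀ i, ↥(Xs i)) →L[𝕜] (∀ i, ↥(Xs i))) + M) f) i : X)) =
        (f i : X) + ∑ j ∈ Finset.univ.erase i, P i ((f j : X)) := by
      rw [ContinuousLinearMap.add_apply, ContinuousLinearMap.one_apply]
      rw [show ((f + M f) i : X) = (f i : X) + ((M f i : X)) from rfl, hMapp]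
    rw [hl, hre, ← Finset.add_sum_erase _ (fun j => P i ((f j : X))) (Finset.mem_univ i),
      hfix i _ (f i).2]
  -- the projection Q
  set Q : X →L[𝕜] X := S.comp ((↑u⁻¹ : (∀ i, ↥(Xs i)) →L[𝕜] (∀ i, ↥(Xs i))).comp v) with hQ
  have hQapp : ∀ x : X, Q x = S ((↑u⁻¹ : (∀ i, ↥(Xs i)) →L[𝕜] (∀ i, ↥(Xs i))) (v x)) := fun x => rfl
  have hQP : ∀ (x : X) i, P i (Q x) = P i x := by
    intro x i
    rw [hQapp, hkey, hNR]
    exact hvapp x i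
  have hQmem : ∀ x : X, Q x ∈ ⨆ i, Xs i := by
    intro x
    rw [hQapp, hSapp]
    exact Submodule.sum_mem _ fun j _ =>
      Submodule.mem_iSup_of_mem j ((((↑u⁻¹ : (∀ i, ↥(Xs i)) →L[𝕜] (∀ i, ↥(Xs i)))) (v x)) j).2
  -- uniqueness: if all projections kill S f then f = 0
  have huniq : ∀ f : (∀ i, ↥(Xs i)), (∀ i, P i (S f) = 0) → S f = 0 := by
    intro f hf
    have hNf : (((1 : (∀ i, ↥(Xs i)) →L[𝕜] (∀ i, ↥(Xs i))) + M) f) = 0 := by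
      funext i
      exact Subtype.ext (by rw [← hkey f i, hf i]; rfl)
    have : f = 0 := by
      have := hRN f
      rw [hNf] at this
      rw [← this, map_zero]
    rw [this, map_zero]
  -- every element of the sup is in the range of S
  have hsupS : ∀ x ∈ ⨆ i, Xs i, ∃ f : (∀ i, ↥(Xs i)), S f = x := by
    intro x hx
    have hle : (⨆ i, Xs i) ≤ LinearMap.range (S : (∀ i, ↥(Xs i)) →ₗ[𝕜] X) := by
      refine iSup_le fun j => ?_
      intro w hw
      refine ⟨Pi.single j ⟨w, hw⟩, ?_⟩
      show S (Pi.single j ⟨w, hw⟩) = w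
      rw [hSapp, Finset.sum_eq_single j]
      · rw [Pi.single_eq_same]
      · intro l _ hlj
        rw [Pi.single_eq_of_ne hlj]; rfl
      · simp
    obtain ⟨f, hf⟩ := hle hx
    exact ⟨f, hf⟩
  -- disjointness
  have hdisj : ∀ x, x ∈ (⨆ i, Xs i) → (∀ i, P i x = 0) → x = 0 := by
    intro x hx hker
    obtain ⟨f, rfl⟩ := hsupS x hx
    exact huniq f hker
  have hfixQ : ∀ x ∈ ⨆ i, Xs i, Q x = x := by
    intro x hx
    have hsub : Q x - x ∈ ⨆ i, Xs i := Submodule.sub_mem _ (hQmem x) hx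
    have hker : ∀ i, P i (Q x - x) = 0 := by
      intro i
      rw [map_sub, hQP, sub_self]
    exact sub_eq_zero.mp (hdisj _ hsub hker)
  constructor
  · exact ⟨Q.codRestrict _ hQmem, fun x => Subtype.ext (hfixQ x x.2)⟩
  · constructor
    · rw [disjoint_iff_inf_le]
      intro x hx
      have hx1 : x ∈ ⨆ i, Xs i := hx.1
      have hx2 : ∀ i, P i x = 0 := by
        intro i
        exact (Submodule.mem_iInf _).mp hx.2 i
      rw [Submodule.mem_bot]
      exact hdisj x hx1 hx2
    · rw [codisjoint_iff_le_sup]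
      intro x _
      refine Submodule.mem_sup.mpr ⟨Q x, hQmem x, x - Q x, ?_, by abel⟩
      refine (Submodule.mem_iInf _).mpr fun i => ?_
      exact LinearMap.mem_ker.mpr (by rw [map_sub, ContinuousLinearMap.coe_coe, hQP, sub_self])
end

section
/- Under the hypotheses of the previous theorem (spectral radius of E less than 1), with A = P_1 + ... + P_n, the sequence of operators I - (I - A)^N converges in operator norm, as N → ∞, to the projection P onto X_1 + ... + X_n along ker(P_1) ∩ ... ∩ ker(P_n). -/
open Filter

section MatrixBound
attribute [local instance] Matrix.linftyOpNormedRing Matrix.linftyOpNormedAlgebra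

lemma entry_norm_le {n : ℕ} (M : Matrix (Fin n) (Fin n) ℂ) (i j : Fin n) :
    ‖M i j‖ ≤ ‖M‖ := by
  have h1 : ‖M i j‖₊ ≤ ∑ k, ‖M i k‖₊ :=
    Finset.single_le_sum (f := fun k => ‖M i k‖₊) (fun k _ => zero_le) (Finset.mem_univ j)
  have h2 : (∑ k, ‖M i k‖₊) ≤ Finset.univ.sup fun i => ∑ k, ‖M i k‖₊ :=
    Finset.le_sup (f := fun i => ∑ k, ‖M i k‖₊) (Finset.mem_univ i)
  have := (h1.trans h2)
  rw [← Matrix.linfty_opNNNorm_def] at this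
  exact_mod_cast this

lemma pow_entry_bound {n : ℕ} (E : Matrix (Fin n) (Fin n) ℝ) (hr : SpecRadLT E 1) :
    ∃ C ρ : ℝ, 0 ≤ C ∧ 0 < ρ ∧ ρ < 1 ∧ ∀ N i j, |(E ^ N) i j| ≤ C * ρ ^ N := by
  rcases Nat.eq_zero_or_pos n with hn | hn
  · exact ⟨1, 1/2, by norm_num, by norm_num, by norm_num, fun N i j => by
      subst hn; exact absurd i.2 (by simp)⟩
  haveI : NeZero n := ⟨hn.ne'⟩
  set F : Matrix (Fin n) (Fin n) ℂ := Complex.ofRealHom.mapMatrix E with hF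
  have hFE : F = E.map (Complex.ofReal · : ℝ → ℂ) := rfl
  have hsr : spectralRadius ℂ F < 1 := by
    have := spectrum.spectralRadius_lt_of_forall_lt (a := F) (r := 1)
      (fun z hz => by
        have := hr z (by rwa [← hFE])
        simpa [← NNReal.coe_lt_coe] using this)
    simpa using this
  obtain ⟨ρ', hρ1, hρ2⟩ := exists_between hsr
  have hρtop : ρ' ≠ ⊤ := (hρ2.trans (by norm_num)).ne
  set ρ : ℝ := max ρ'.toReal (1/2) with hρdef
  have hρpos : 0 < ρ := lt_of_lt_of_le (by norm_num) (le_max_right _ _)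
  have hρlt1 : ρ < 1 := by
    apply max_lt _ (by norm_num)
    rw [← ENNReal.toReal_one]
    exact ENNReal.toReal_strict_mono (by norm_num) hρ2
  -- eventual bound
  have gelfand := spectrum.pow_norm_pow_one_div_tendsto_nhds_spectralRadius F
  have hev : ∀ᶠ N : ℕ in atTop, ENNReal.ofReal (‖F ^ N‖ ^ (1/(N:ℝ))) < ρ' :=
    gelfand.eventually_lt_const hρ1
  rw [eventually_atTop] at hev
  obtain ⟨N₀, hN₀⟩ := hev
  have key : ∀ N ≥ max N₀ 1, ‖F ^ N‖ ≤ ρ ^ N := by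
    intro N hN
    have hN1 : 1 ≤ N := le_trans (le_max_right _ _) hN
    have h := hN₀ N (le_trans (le_max_left _ _) hN)
    have hlt : ‖F ^ N‖ ^ (1/(N:ℝ)) < ρ'.toReal := by
      rwa [ENNReal.ofReal_lt_iff_lt_toReal (Real.rpow_nonneg (norm_nonneg _) _) hρtop] at h
    have hle : ‖F ^ N‖ ^ (1/(N:ℝ)) ≤ ρ := le_trans hlt.le (le_max_left _ _)
    have hNne : (N : ℝ) ≠ 0 := Nat.cast_ne_zero.mpr (by omega)
    calc ‖F ^ N‖ = (‖F ^ N‖ ^ (1/(N:ℝ))) ^ (N : ℕ) := by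
          rw [← Real.rpow_natCast (‖F ^ N‖ ^ (1/(N:ℝ))) N, ← Real.rpow_mul (norm_nonneg _),
            one_div_mul_cancel hNne, Real.rpow_one]
      _ ≤ ρ ^ N := pow_le_pow_left₀ (Real.rpow_nonneg (norm_nonneg _) _) hle N
  set M := max N₀ 1
  set C : ℝ := 1 + ∑ k ∈ Finset.range M, ‖F ^ k‖ / ρ ^ k with hC
  have hCnonneg : 0 ≤ C := by
    have : 0 ≤ ∑ k ∈ Finset.range M, ‖F ^ k‖ / ρ ^ k :=
      Finset.sum_nonneg fun k _ => div_nonneg (norm_nonneg _) (pow_nonneg hρpos.le _)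
    rw [hC]; linarith
  refine ⟨C, ρ, hCnonneg, hρpos, hρlt1, fun N i j => ?_⟩
  have hnormle : ‖F ^ N‖ ≤ C * ρ ^ N := by
    rcases le_or_gt M N with h | h
    · calc ‖F ^ N‖ ≤ ρ ^ N := key N h
        _ ≤ C * ρ ^ N := by
          rw [hC]
          nlinarith [pow_nonneg hρpos.le N,
            Finset.sum_nonneg (fun k (_ : k ∈ Finset.range M) =>
              div_nonneg (norm_nonneg (F ^ k)) (pow_nonneg hρpos.le k))]
    · have hmem : N ∈ Finset.range M := Finset.mem_range.mpr h
      have h1 : ‖F ^ N‖ / ρ ^ N ≤ ∑ k ∈ Finset.range M, ‖F ^ k‖ / ρ ^ k :=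
        Finset.single_le_sum (f := fun k => ‖F ^ k‖ / ρ ^ k)
          (fun k _ => div_nonneg (norm_nonneg _) (pow_nonneg hρpos.le _)) hmem
      have hpow : (0:ℝ) < ρ ^ N := pow_pos hρpos N
      rw [div_le_iff₀ hpow] at h1
      calc ‖F ^ N‖ ≤ (∑ k ∈ Finset.range M, ‖F ^ k‖ / ρ ^ k) * ρ ^ N := h1
        _ ≤ C * ρ ^ N := by
          apply mul_le_mul_of_nonneg_right _ hpow.le
          simp [hC]
  have hentry : |(E ^ N) i j| = ‖(F ^ N) i j‖ := by
    have : F ^ N = Complex.ofRealHom.mapMatrix (E ^ N) := by rw [map_pow]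
    rw [this]
    simp [RingHom.mapMatrix_apply, Matrix.map_apply, Complex.norm_real]
  rw [hentry]
  exact (entry_norm_le _ i j).trans hnormle

end MatrixBound

/-- Under the hypotheses `r(E) < 1`, with `A = P₁ + ... + Pₙ`, the operators `I - (I - A)^N`
converge in operator norm, as `N → ∞`, to the projection onto `X₁ + ... + Xₙ` along
`ker P₁ ∩ ... ∩ ker Pₙ`. -/
theorem tendsto_proj_of_spectralRadius_lt_one {𝕜 : Type*} [RCLike 𝕜] {X : Type*}
    [NormedAddCommGroup X] [NormedSpace 𝕜 X] [CompleteSpace X] {n : ℕ}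
    (Xs : Fin n → Submodule 𝕜 X) (P : Fin n → X →L[𝕜] X)
    (hidem : ∀ i, ∀ x, P i (P i x) = P i x)
    (hrange : ∀ i, LinearMap.range (P i : X →ₗ[𝕜] X) = Xs i)
    (ε : Fin n → Fin n → ℝ) (hε : ∀ i j, 0 ≤ ε i j)
    (hbound : ∀ i j, i ≠ j → ∀ x ∈ Xs j, ‖P i x‖ ≤ ε i j * ‖x‖)
    (E : Matrix (Fin n) (Fin n) ℝ)
    (hEdef : ∀ i j, E i j = if i = j then 0 else ε i j)
    (hr : SpecRadLT E 1) :
    ∃ Q : X →L[𝕜] X, (∀ x, Q (Q x) = Q x) ∧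
      LinearMap.range (Q : X →ₗ[𝕜] X) = (⨆ i, Xs i) ∧
      LinearMap.ker (Q : X →ₗ[𝕜] X) = (⨅ i, LinearMap.ker (P i : X →ₗ[𝕜] X)) ∧
      Filter.Tendsto (fun N : ℕ => 1 - (1 - ∑ i, P i) ^ N) Filter.atTop (nhds Q) := by
  obtain ⟨C, ρ, hC0, hρ0, hρ1, hCρ⟩ := pow_entry_bound E hr
  set A : X →L[𝕜] X := ∑ i, P i with hA
  set T : X →L[𝕜] X := 1 - A with hT
  -- basic facts
  have hP_mem : ∀ i x, P i x ∈ Xs i := by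
    intro i x; rw [← hrange i]; exact ⟨x, rfl⟩
  have hP_id : ∀ i, ∀ x ∈ Xs i, P i x = x := by
    intro i x hx
    rw [← hrange i] at hx
    obtain ⟨y, rfl⟩ := hx
    exact hidem i y
  have hXs_closed : ∀ i, IsClosed (Xs i : Set X) := by
    intro i
    have : (Xs i : Set X) = {x | P i x = x} := by
      ext x
      constructor
      · exact fun hx => hP_id i x hx
      · intro hx; rw [← hx]; exact hP_mem i x
    rw [this]
    exact isClosed_eq (P i).continuous continuous_id
  have hE0 : ∀ i j, 0 ≤ E i j := by
    intro i j; rw [hEdef]; split <;> [rfl; exact hε i j]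
  have hEN0 : ∀ N i j, 0 ≤ (E ^ N) i j := by
    intro N
    induction N with
    | zero => intro i j; simp [Matrix.one_apply]; split <;> norm_num
    | succ N ih =>
      intro i j
      rw [pow_succ, Matrix.mul_apply]
      exact Finset.sum_nonneg fun k _ => mul_nonneg (ih i k) (hE0 k j)
  -- the key decomposition lemma
  have key_sum : ∀ (N : ℕ) (x : Fin n → X), (∀ i, x i ∈ Xs i) →
      ∃ y : Fin n → X, (∀ i, y i ∈ Xs i) ∧ (T ^ N) (∑ i, x i) = ∑ i, y i ∧
        ∀ i, ‖y i‖ ≤ ∑ j, (E ^ N) i j * ‖x j‖ := by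
    -- one-step version
    have step : ∀ (x : Fin n → X), (∀ i, x i ∈ Xs i) →
        ∃ y : Fin n → X, (∀ i, y i ∈ Xs i) ∧ T (∑ i, x i) = ∑ i, y i ∧
          ∀ i, ‖y i‖ ≤ ∑ j, E i j * ‖x j‖ := by
      intro x hx
      refine ⟨fun i => x i - P i (∑ j, x j), ?_, ?_, ?_⟩
      · intro i
        exact Submodule.sub_mem _ (hx i) (hP_mem i _)
      · rw [Finset.sum_sub_distrib]
        have hTapp : T (∑ i, x i) = (∑ i, x i) - A (∑ i, x i) := by
          rw [hT]; simp [ContinuousLinearMap.sub_apply]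
        rw [hTapp]
        congr 1
        rw [hA, ContinuousLinearMap.sum_apply]
      · intro i
        have hyi : x i - P i (∑ j, x j) = -∑ j ∈ Finset.univ.erase i, P i (x j) := by
          rw [map_sum, ← Finset.add_sum_erase _ _ (Finset.mem_univ i), hP_id i (x i) (hx i)]
          abel
        show ‖x i - P i (∑ j, x j)‖ ≤ _
        rw [hyi, norm_neg]
        calc ‖∑ j ∈ Finset.univ.erase i, P i (x j)‖
            ≤ ∑ j ∈ Finset.univ.erase i, ‖P i (x j)‖ := norm_sum_le _ _
          _ ≤ ∑ j ∈ Finset.univ.erase i, E i j * ‖x j‖ := by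
              apply Finset.sum_le_sum
              intro j hj
              have hij : i ≠ j := (Finset.ne_of_mem_erase hj).symm
              rw [hEdef i j, if_neg hij]
              exact hbound i j hij (x j) (hx j)
          _ = ∑ j, E i j * ‖x j‖ := by
              rw [← Finset.sum_erase_add Finset.univ (fun j => E i j * ‖x j‖) (Finset.mem_univ i),
                hEdef i i, if_pos rfl]
              simp
    intro N
    induction N with
    | zero =>
      intro x hx
      refine ⟨x, hx, by simp, fun i => ?_⟩
      rw [pow_zero]
      have : ∀ j, ((1 : Matrix (Fin n) (Fin n) ℝ)) i j * ‖x j‖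
          = if i = j then ‖x j‖ else 0 := by
        intro j; rw [Matrix.one_apply]; split <;> simp
      rw [Finset.sum_congr rfl fun j _ => this j]
      simp
    | succ N ih =>
      intro x hx
      obtain ⟨y, hy1, hy2, hy3⟩ := step x hx
      obtain ⟨z, hz1, hz2, hz3⟩ := ih y hy1
      refine ⟨z, hz1, ?_, ?_⟩
      · have : (T ^ (N + 1)) (∑ i, x i) = (T ^ N) (T (∑ i, x i)) := by
          rw [pow_succ]; rfl
        rw [this, hy2, hz2]
      · intro i
        calc ‖z i‖ ≤ ∑ j, (E ^ N) i j * ‖y j‖ := hz3 i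
          _ ≤ ∑ j, (E ^ N) i j * (∑ k, E j k * ‖x k‖) := by
              apply Finset.sum_le_sum
              intro j _
              exact mul_le_mul_of_nonneg_left (hy3 j) (hEN0 N i j)
          _ = ∑ k, (E ^ (N + 1)) i k * ‖x k‖ := by
              rw [pow_succ]
              simp_rw [Finset.mul_sum, Matrix.mul_apply, Finset.sum_mul]
              rw [Finset.sum_comm]
              congr 1; ext j; congr 1; ext k; ring
  -- bound on T^N * A
  set D : ℝ := C * ∑ _i : Fin n, ∑ j : Fin n, ‖P j‖ with hD
  have hD0 : 0 ≤ D := by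
    apply mul_nonneg hC0
    exact Finset.sum_nonneg fun i _ => Finset.sum_nonneg fun j _ => norm_nonneg _
  have hEle : ∀ N i j, (E ^ N) i j ≤ C * ρ ^ N := fun N i j =>
    (le_abs_self _).trans (hCρ N i j)
  have hTA : ∀ N : ℕ, ‖T ^ N * A‖ ≤ D * ρ ^ N := by
    intro N
    apply ContinuousLinearMap.opNorm_le_bound _
      (mul_nonneg hD0 (pow_nonneg hρ0.le N))
    intro x
    obtain ⟨y, hy1, hy2, hy3⟩ := key_sum N (fun j => P j x) (fun j => hP_mem j x)
    have hAx : A x = ∑ j, P j x := by rw [hA, ContinuousLinearMap.sum_apply]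
    have happ : (T ^ N * A) x = ∑ i, y i := by
      rw [ContinuousLinearMap.mul_apply, hAx, hy2]
    rw [happ]
    calc ‖∑ i, y i‖ ≤ ∑ i, ‖y i‖ := norm_sum_le _ _
      _ ≤ ∑ i : Fin n, ∑ j : Fin n, (E ^ N) i j * ‖P j x‖ :=
          Finset.sum_le_sum fun i _ => hy3 i
      _ ≤ ∑ i : Fin n, ∑ j : Fin n, (C * ρ ^ N) * (‖P j‖ * ‖x‖) := by
          apply Finset.sum_le_sum; intro i _
          apply Finset.sum_le_sum; intro j _
          exact mul_le_mul (hEle N i j) ((P j).le_opNorm x) (norm_nonneg _)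
            (mul_nonneg hC0 (pow_nonneg hρ0.le N))
      _ = D * ρ ^ N * ‖x‖ := by
          rw [hD]
          simp only [← Finset.mul_sum, ← Finset.sum_mul, Finset.sum_const,
            Finset.card_univ, Fintype.card_fin, nsmul_eq_mul]
          ring
  -- convergence of T ^ N
  have hTsub : ∀ N : ℕ, T ^ N - T ^ (N + 1) = T ^ N * A := by
    intro N
    rw [pow_succ, hT]
    noncomm_ring
  have hcauchy : CauchySeq (fun N : ℕ => T ^ N) := by
    apply cauchySeq_of_le_geometric ρ D hρ1
    intro N
    rw [dist_eq_norm, hTsub N]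
    exact hTA N
  obtain ⟨R, hR⟩ := cauchySeq_tendsto_of_complete hcauchy
  have happly : ∀ x : X, Tendsto (fun N : ℕ => (T ^ N) x) atTop (nhds (R x)) := by
    intro x
    exact ((ContinuousLinearMap.apply 𝕜 X x).continuous.tendsto R).comp hR
  -- algebraic identities
  have hRT : R * T = R := by
    have h1 : Tendsto (fun N : ℕ => T ^ (N + 1)) atTop (nhds (R * T)) := by
      have := hR.mul (tendsto_const_nhds (x := T))
      simpa [← pow_succ] using this
    have h2 : Tendsto (fun N : ℕ => T ^ (N + 1)) atTop (nhds R) :=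
      hR.comp (tendsto_add_atTop_nat 1)
    exact tendsto_nhds_unique h1 h2
  have hRR : R * R = R := by
    have h1 : Tendsto (fun N : ℕ => T ^ (N + N)) atTop (nhds (R * R)) := by
      have := hR.mul hR
      simpa [← pow_add] using this
    have h2 : Tendsto (fun N : ℕ => T ^ (N + N)) atTop (nhds R) :=
      hR.comp (tendsto_atTop_mono (fun N => Nat.le_add_left N N) tendsto_id)
    exact tendsto_nhds_unique h1 h2
  have hTA0 : Tendsto (fun N : ℕ => T ^ N * A) atTop (nhds 0) := by
    apply squeeze_zero_norm hTA
    have := (tendsto_pow_atTop_nhds_zero_of_lt_one hρ0.le hρ1).const_mul D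
    simpa using this
  have hRA : R * A = 0 :=
    tendsto_nhds_unique (hR.mul (tendsto_const_nhds (x := A))) hTA0
  have hAR : A * R = 0 := by
    have hcom : ∀ N : ℕ, A * T ^ N = T ^ N * A := by
      intro N
      have : Commute A T := by
        rw [hT]
        exact ((Commute.one_right A).sub_right (Commute.refl A))
      exact (this.pow_right N).eq
    have h1 : Tendsto (fun N : ℕ => A * T ^ N) atTop (nhds (A * R)) :=
      (tendsto_const_nhds (x := A)).mul hR
    have h2 : Tendsto (fun N : ℕ => A * T ^ N) atTop (nhds 0) := by
      simpa [hcom] using hTA0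
    exact tendsto_nhds_unique h1 h2
  refine ⟨1 - R, ?_, ?_, ?_, ?_⟩
  · -- idempotent
    have h : (1 - R) * (1 - R) = 1 - R := by
      have h2 : (1 - R) * (1 - R) = 1 - R - R + R * R := by noncomm_ring
      rw [h2, hRR]; abel
    intro x
    calc (1 - R) ((1 - R) x) = ((1 - R) * (1 - R)) x := rfl
      _ = (1 - R) x := by rw [h]
  · -- range
    apply le_antisymm
    · -- range (1 - R) ≤ ⨆ Xs i
      rintro _ ⟨x, rfl⟩
      have hAx : (∑ j, P j x) = A x := by rw [hA, ContinuousLinearMap.sum_apply]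
      have H : ∀ k : ℕ, ∃ y : Fin n → X, (∀ i, y i ∈ Xs i) ∧
          (T ^ k) (∑ j, P j x) = ∑ i, y i ∧
          ∀ i, ‖y i‖ ≤ ∑ j, (E ^ k) i j * ‖P j x‖ :=
        fun k => key_sum k (fun j => P j x) (fun j => hP_mem j x)
      choose y hy1 hy2 hy3 using H
      have hybound : ∀ (k : ℕ) (i : Fin n), ‖y k i‖ ≤ (C * ∑ j, ‖P j x‖) * ρ ^ k := by
        intro k i
        calc ‖y k i‖ ≤ ∑ j, (E ^ k) i j * ‖P j x‖ := hy3 k i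
          _ ≤ ∑ j, (C * ρ ^ k) * ‖P j x‖ := by
              apply Finset.sum_le_sum
              intro j _
              exact mul_le_mul_of_nonneg_right (hEle k i j) (norm_nonneg _)
          _ = (C * ∑ j, ‖P j x‖) * ρ ^ k := by
              rw [← Finset.mul_sum]
              ring
      have hsum : ∀ i, Summable (fun k : ℕ => y k i) := by
        intro i
        apply Summable.of_norm_bounded ((summable_geometric_of_lt_one hρ0.le hρ1).mul_left
          (C * ∑ j, ‖P j x‖))
        exact fun k => hybound k i
      set s : Fin n → X := fun i => ∑' k, y k i with hs
      have hs_tend : ∀ i, Tendsto (fun K => ∑ k ∈ Finset.range K, y k i)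
          atTop (nhds (s i)) := fun i => (hsum i).hasSum.tendsto_sum_nat
      have hs_mem : ∀ i, s i ∈ Xs i := by
        intro i
        apply (hXs_closed i).mem_of_tendsto (hs_tend i)
        exact Filter.Eventually.of_forall fun K => Submodule.sum_mem _ fun k _ => hy1 k i
      have htel : ∀ K : ℕ, x - (T ^ K) x = ∑ k ∈ Finset.range K, (T ^ k) (A x) := by
        intro K
        induction K with
        | zero => simp
        | succ K ih =>
          rw [Finset.sum_range_succ, ← ih]
          have h5 : (T ^ (K + 1)) x = (T ^ K) (T x) := by rw [pow_succ]; rfl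
          have h6 : (T ^ K) (A x) = (T ^ K) x - (T ^ K) (T x) := by
            rw [← map_sub]
            congr 1
            rw [hT]
            simp [ContinuousLinearMap.sub_apply]
          rw [h5, h6]
          abel
      have heq : ∀ K : ℕ, ∑ i, ∑ k ∈ Finset.range K, y k i = x - (T ^ K) x := by
        intro K
        rw [Finset.sum_comm, htel K]
        apply Finset.sum_congr rfl
        intro k _
        rw [← hy2 k, hAx]
      have hleft : Tendsto (fun K => ∑ i, ∑ k ∈ Finset.range K, y k i)
          atTop (nhds (∑ i, s i)) :=
        tendsto_finset_sum _ fun i _ => hs_tend i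
      have hright : Tendsto (fun K : ℕ => x - (T ^ K) x) atTop (nhds (x - R x)) :=
        tendsto_const_nhds.sub (happly x)
      have hQx : x - R x = ∑ i, s i := by
        refine tendsto_nhds_unique ?_ hleft
        simp only [heq]
        exact hright
      have : (1 - R) x = x - R x := by simp [ContinuousLinearMap.sub_apply]
      rw [ContinuousLinearMap.coe_coe, this, hQx]
      exact Submodule.sum_mem _ fun i _ => Submodule.mem_iSup_of_mem i (hs_mem i)
    · -- ⨆ Xs i ≤ range (1 - R)
      apply iSup_le
      intro j x hx
      have hw : ∀ i, (if i = j then x else 0) ∈ Xs i := by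
        intro i
        split
        · next h => rw [h]; exact hx
        · exact Submodule.zero_mem _
      have hwsum : ∑ i, (if i = j then x else 0) = x := by
        rw [Finset.sum_ite_eq' Finset.univ j (fun _ => x)]
        simp
      have hx0 : Tendsto (fun N : ℕ => (T ^ N) x) atTop (nhds 0) := by
        apply squeeze_zero_norm (a := fun N => (↑n * (C * ∑ k : Fin n, ‖(if k = j then x else 0 : X)‖)) * ρ ^ N)
        · intro N
          obtain ⟨y, hy1, hy2, hy3⟩ := key_sum N (fun i => if i = j then x else 0) hw
          rw [hwsum] at hy2
          rw [hy2]
          calc ‖∑ i, y i‖ ≤ ∑ i, ‖y i‖ := norm_sum_le _ _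
            _ ≤ ∑ _i : Fin n, (C * ∑ k : Fin n, ‖(if k = j then x else 0 : X)‖) * ρ ^ N := by
                apply Finset.sum_le_sum
                intro i _
                calc ‖y i‖ ≤ ∑ k, (E ^ N) i k * ‖(if k = j then x else 0 : X)‖ := hy3 i
                  _ ≤ ∑ k, (C * ρ ^ N) * ‖(if k = j then x else 0 : X)‖ := by
                      apply Finset.sum_le_sum
                      intro k _
                      exact mul_le_mul_of_nonneg_right (hEle N i k) (norm_nonneg _)
                  _ = (C * ∑ k : Fin n, ‖(if k = j then x else 0 : X)‖) * ρ ^ N := by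
                      rw [← Finset.mul_sum]
                      ring
            _ = (↑n * (C * ∑ k : Fin n, ‖(if k = j then x else 0 : X)‖)) * ρ ^ N := by
                rw [Finset.sum_const, Finset.card_univ, Fintype.card_fin, nsmul_eq_mul]
                ring
        · simpa using (tendsto_pow_atTop_nhds_zero_of_lt_one hρ0.le hρ1).const_mul
            (↑n * (C * ∑ k : Fin n, ‖(if k = j then x else 0 : X)‖))
      have hRx : R x = 0 := tendsto_nhds_unique (happly x) hx0
      exact ⟨x, by simp [ContinuousLinearMap.sub_apply, hRx]⟩
  · -- kernel
    ext x
    simp only [LinearMap.mem_ker, Submodule.mem_iInf, ContinuousLinearMap.coe_coe]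
    constructor
    · intro hx
      have hxR : x = R x := by
        have h1 : (1 - R) x = x - R x := by simp [ContinuousLinearMap.sub_apply]
        rw [h1] at hx
        exact sub_eq_zero.mp hx
      have hAx : A x = 0 := by
        have h2 : A x = (A * R) x := by rw [ContinuousLinearMap.mul_apply, ← hxR]
        rw [h2, hAR, ContinuousLinearMap.zero_apply]
      have hvE : ∀ i, ‖P i x‖ ≤ ∑ j, E i j * ‖P j x‖ := by
        intro i
        have h0 : ∑ j, P i (P j x) = 0 := by
          rw [← map_sum]
          have : ∑ j, P j x = A x := by rw [hA, ContinuousLinearMap.sum_apply]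
          rw [this, hAx, map_zero]
        have h1 : P i x = -∑ j ∈ Finset.univ.erase i, P i (P j x) := by
          rw [← Finset.add_sum_erase _ _ (Finset.mem_univ i), hidem i x] at h0
          exact eq_neg_of_add_eq_zero_left h0
        rw [h1, norm_neg]
        calc ‖∑ j ∈ Finset.univ.erase i, P i (P j x)‖
            ≤ ∑ j ∈ Finset.univ.erase i, ‖P i (P j x)‖ := norm_sum_le _ _
          _ ≤ ∑ j ∈ Finset.univ.erase i, E i j * ‖P j x‖ := by
              apply Finset.sum_le_sum
              intro j hj
              have hij : i ≠ j := (Finset.ne_of_mem_erase hj).symm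
              rw [hEdef i j, if_neg hij]
              exact hbound i j hij _ (hP_mem j x)
          _ = ∑ j, E i j * ‖P j x‖ := by
              rw [← Finset.sum_erase_add Finset.univ (fun j => E i j * ‖P j x‖)
                (Finset.mem_univ i), hEdef i i, if_pos rfl]
              simp
      have hvEN : ∀ N i, ‖P i x‖ ≤ ∑ j, (E ^ N) i j * ‖P j x‖ := by
        intro N
        induction N with
        | zero =>
          intro i
          have h3 : ∀ j, ((1 : Matrix (Fin n) (Fin n) ℝ)) i j * ‖P j x‖
              = if i = j then ‖P j x‖ else 0 := by
            intro j; rw [Matrix.one_apply]; split <;> simp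
          rw [pow_zero, Finset.sum_congr rfl fun j _ => h3 j]
          simp
        | succ N ih =>
          intro i
          calc ‖P i x‖ ≤ ∑ j, E i j * ‖P j x‖ := hvE i
            _ ≤ ∑ j, E i j * (∑ k, (E ^ N) j k * ‖P k x‖) := by
                apply Finset.sum_le_sum
                intro j _
                exact mul_le_mul_of_nonneg_left (ih j) (hE0 i j)
            _ = ∑ k, (E ^ (N + 1)) i k * ‖P k x‖ := by
                rw [pow_succ']
                simp_rw [Finset.mul_sum, Matrix.mul_apply, Finset.sum_mul]
                rw [Finset.sum_comm]
                congr 1; ext j; congr 1; ext k; ring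
      intro i
      have hle : ∀ N : ℕ, ‖P i x‖ ≤ (C * ∑ j, ‖P j x‖) * ρ ^ N := by
        intro N
        calc ‖P i x‖ ≤ ∑ j, (E ^ N) i j * ‖P j x‖ := hvEN N i
          _ ≤ ∑ j, (C * ρ ^ N) * ‖P j x‖ := by
              apply Finset.sum_le_sum
              intro j _
              exact mul_le_mul_of_nonneg_right (hEle N i j) (norm_nonneg _)
          _ = (C * ∑ j, ‖P j x‖) * ρ ^ N := by
              rw [← Finset.mul_sum]
              ring
      have h0 : Tendsto (fun N : ℕ => (C * ∑ j, ‖P j x‖) * ρ ^ N) atTop (nhds 0) := by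
        simpa using (tendsto_pow_atTop_nhds_zero_of_lt_one hρ0.le hρ1).const_mul
          (C * ∑ j, ‖P j x‖)
      have h4 : ‖P i x‖ ≤ 0 := ge_of_tendsto h0 (Filter.Eventually.of_forall hle)
      exact norm_le_zero_iff.mp h4
    · intro hx
      have hAx : A x = 0 := by
        rw [hA, ContinuousLinearMap.sum_apply]
        exact Finset.sum_eq_zero fun i _ => hx i
      have hTx : T x = x := by
        rw [hT]
        simp [ContinuousLinearMap.sub_apply, hAx]
      have hTN : ∀ N : ℕ, (T ^ N) x = x := by
        intro N
        induction N with
        | zero => simp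
        | succ N ih =>
          rw [pow_succ, ContinuousLinearMap.mul_apply, hTx, ih]
      have : R x = x :=
        tendsto_nhds_unique (happly x) (by simp only [hTN]; exact tendsto_const_nhds)
      simp [ContinuousLinearMap.sub_apply, this]
  · -- tendsto
    have : Tendsto (fun N : ℕ => (1 : X →L[𝕜] X) - T ^ N) atTop (nhds (1 - R)) :=
      tendsto_const_nhds.sub hR
    exact this
end

section
/- Let P_1,...,P_n be continuous linear projections on a Banach space X onto X_1,...,X_n, with ‖P_i x‖ ≤ ε_{ij}‖x‖ for x ∈ X_j (i ≠ j), and E the associated matrix. Suppose w = (w_1,...,w_n) has positive coordinates and α ∈ [0,1) satisfy Ew ≤ αw coordinatewise. Then with A = P_1 + ... + P_n and P the projection onto X_1+...+X_n along ∩ker(P_i), for every N ≥ 1: ‖I - (I-A)^N - P‖ ≤ (w_1 + ... + w_n) · max_i (‖P_i‖ / w_i) · α^N / (1 - α). -/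
/-- Rate of convergence of `I - (I - A)^N` to the projection `Q` onto `X₁ + ... + Xₙ` along
`ker P₁ ∩ ... ∩ ker Pₙ`, when `E w ≤ α w` coordinatewise for a positive vector `w` and
`α ∈ [0, 1)`. -/
theorem rate_of_convergence {𝕜 : Type*} [RCLike 𝕜] {X : Type*}
    [NormedAddCommGroup X] [NormedSpace 𝕜 X] [CompleteSpace X] {n : ℕ} (hn : 0 < n)
    (Xs : Fin n → Submodule 𝕜 X) (P : Fin n → X →L[𝕜] X)
    (hidem : ∀ i, ∀ x, P i (P i x) = P i x)
    (hrange : ∀ i, LinearMap.range (P i : X →ₗ[𝕜] X) = Xs i)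
    (ε : Fin n → Fin n → ℝ) (hε : ∀ i j, 0 ≤ ε i j)
    (hbound : ∀ i j, i ≠ j → ∀ x ∈ Xs j, ‖P i x‖ ≤ ε i j * ‖x‖)
    (E : Matrix (Fin n) (Fin n) ℝ)
    (hEdef : ∀ i j, E i j = if i = j then 0 else ε i j)
    (w : Fin n → ℝ) (hw : ∀ i, 0 < w i)
    (α : ℝ) (hα0 : 0 ≤ α) (hα1 : α < 1)
    (hEw : ∀ i, ∑ j, E i j * w j ≤ α * w i)
    (Q : X →L[𝕜] X) (hQ : ∀ x, Q (Q x) = Q x)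
    (hQrange : LinearMap.range (Q : X →ₗ[𝕜] X) = (⨆ i, Xs i))
    (hQker : LinearMap.ker (Q : X →ₗ[𝕜] X) = (⨅ i, LinearMap.ker (P i : X →ₗ[𝕜] X))) :
    ∀ N : ℕ, 1 ≤ N →
      ‖1 - (1 - ∑ i, P i) ^ N - Q‖ ≤
        (∑ i, w i) * (⨆ i, ‖P i‖ / w i) * (α ^ N / (1 - α)) := by
  have hne : Nonempty (Fin n) := Fin.pos_iff_nonempty.mp hn
  set A : X →L[𝕜] X := ∑ i, P i with hA
  set T : X →L[𝕜] X := 1 - A with hT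
  have hwsum : (0:ℝ) < ∑ i, w i := Finset.sum_pos (fun i _ => hw i) Finset.univ_nonempty
  set Msup : ℝ := ⨆ i, ‖P i‖ / w i with hMsup
  have hMle : ∀ i, ‖P i‖ / w i ≤ Msup := fun i =>
    le_ciSup (f := fun i => ‖P i‖ / w i) (Set.Finite.bddAbove (Set.finite_range _)) i
  have hM0 : 0 ≤ Msup := le_trans (div_nonneg (norm_nonneg _) (hw hne.some).le) (hMle hne.some)
  -- P j acts as identity on Xs j
  have hPval : ∀ j, ∀ x ∈ Xs j, P j x = x := by
    intro j x hx
    rw [← hrange j] at hx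
    obtain ⟨y, rfl⟩ := hx
    exact hidem j y
  have hPmem : ∀ i (x : X), P i x ∈ Xs i := by
    intro i x; rw [← hrange i]; exact ⟨x, rfl⟩
  -- key decay step
  have key : ∀ (c : ℝ), 0 ≤ c → ∀ (v : Fin n → X), (∀ i, v i ∈ Xs i) →
      (∀ i, ‖v i‖ ≤ c * w i) →
      ∃ v' : Fin n → X, (∀ i, v' i ∈ Xs i) ∧ (∀ i, ‖v' i‖ ≤ (c * α) * w i) ∧
        T (∑ i, v i) = ∑ i, v' i := by
    intro c hc v hvm hvn
    refine ⟨fun i => v i - ∑ j, P i (v j), ?_, ?_, ?_⟩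
    · intro i
      exact Submodule.sub_mem _ (hvm i) (Submodule.sum_mem _ fun j _ => hPmem i _)
    · intro i
      show ‖v i - ∑ j, P i (v j)‖ ≤ c * α * w i
      have hvi : v i - ∑ j, P i (v j) = -∑ j ∈ Finset.univ.erase i, P i (v j) := by
        rw [← Finset.add_sum_erase _ _ (Finset.mem_univ i), hPval i (v i) (hvm i)]
        abel
      rw [hvi, norm_neg]
      calc ‖∑ j ∈ Finset.univ.erase i, P i (v j)‖
          ≤ ∑ j ∈ Finset.univ.erase i, ε i j * ‖v j‖ := by
            refine norm_sum_le_of_le _ fun j hj => ?_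
            exact hbound i j (Ne.symm (Finset.ne_of_mem_erase hj)) _ (hvm j)
        _ ≤ ∑ j ∈ Finset.univ.erase i, E i j * (c * w j) := by
            refine Finset.sum_le_sum fun j hj => ?_
            rw [hEdef i j, if_neg (Ne.symm (Finset.ne_of_mem_erase hj))]
            exact mul_le_mul_of_nonneg_left (hvn j) (hε i j)
        _ = c * ∑ j ∈ Finset.univ.erase i, E i j * w j := by
            rw [Finset.mul_sum]
            exact Finset.sum_congr rfl fun j _ => by ring
        _ = c * ∑ j, E i j * w j := by
            congr 1
            exact Finset.sum_erase _ (by rw [hEdef]; simp)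
        _ ≤ c * (α * w i) := mul_le_mul_of_nonneg_left (hEw i) hc
        _ = (c * α) * w i := by ring
    · show T (∑ i, v i) = ∑ i, (v i - ∑ j, P i (v j))
      rw [hT]
      simp only [ContinuousLinearMap.sub_apply, ContinuousLinearMap.one_apply, hA,
        ContinuousLinearMap.sum_apply, map_sum]
      conv_rhs => rw [Finset.sum_sub_distrib, Finset.sum_comm]
      rw [Finset.sum_sub_distrib]
  -- iterated decay
  have keyN : ∀ (N : ℕ) (c : ℝ), 0 ≤ c → ∀ (u : X),
      (∃ v : Fin n → X, (∀ i, v i ∈ Xs i) ∧ (∀ i, ‖v i‖ ≤ c * w i) ∧ u = ∑ i, v i) →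
      ∃ v' : Fin n → X, (∀ i, v' i ∈ Xs i) ∧ (∀ i, ‖v' i‖ ≤ c * α ^ N * w i) ∧
        (T ^ N) u = ∑ i, v' i := by
    intro N
    induction N with
    | zero => intro c hc u ⟨v, h1, h2, h3⟩
              exact ⟨v, h1, by simpa using h2, by simpa using h3⟩
    | succ N ih =>
        intro c hc u ⟨v, h1, h2, h3⟩
        obtain ⟨v1, h1', h2', h3'⟩ := key c hc v h1 h2
        obtain ⟨v2, h1'', h2'', h3''⟩ := ih (c * α) (by positivity) (T u)
          ⟨v1, h1', h2', by rw [h3, h3']⟩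
        refine ⟨v2, h1'', fun i => le_of_le_of_eq (h2'' i) (by ring), ?_⟩
        rw [pow_succ, ContinuousLinearMap.mul_apply, h3'']
  have normdecomp : ∀ (c : ℝ) (v : Fin n → X), (∀ i, ‖v i‖ ≤ c * w i) →
      ‖∑ i, v i‖ ≤ c * ∑ i, w i := by
    intro c v hv
    calc ‖∑ i, v i‖ ≤ ∑ i, c * w i := norm_sum_le_of_le _ fun i _ => hv i
      _ = c * ∑ i, w i := by rw [Finset.mul_sum]
  -- bound on T^k (A x)
  have hTA : ∀ (x : X) (k : ℕ), ‖(T ^ k) (A x)‖ ≤ (Msup * ‖x‖) * α ^ k * ∑ i, w i := by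
    intro x k
    have hb : ∀ i, ‖P i x‖ ≤ (Msup * ‖x‖) * w i := by
      intro i
      calc ‖P i x‖ ≤ ‖P i‖ * ‖x‖ := (P i).le_opNorm x
        _ ≤ (Msup * w i) * ‖x‖ := by
            have := (div_le_iff₀ (hw i)).mp (hMle i)
            exact mul_le_mul_of_nonneg_right this (norm_nonneg x)
        _ = Msup * ‖x‖ * w i := by ring
    obtain ⟨v', h1', h2', h3'⟩ := keyN k (Msup * ‖x‖) (mul_nonneg hM0 (norm_nonneg x)) (A x)
      ⟨fun i => P i x, fun i => hPmem i x, hb, by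
        simp [hA, ContinuousLinearMap.sum_apply]⟩
    rw [h3']
    exact normdecomp _ _ h2'
  -- geometric identity
  have hgeom : ∀ (M : ℕ), (1 : X →L[𝕜] X) - T ^ M = (∑ k ∈ Finset.range M, T ^ k) * A := by
    intro M
    have h := geom_sum_mul T M
    have hTA' : T - 1 = -A := by rw [hT]; abel
    rw [hTA', mul_neg] at h
    have := neg_eq_iff_eq_neg.mp h
    rw [this]; abel
  have hpt : ∀ (M : ℕ) (x : X), x - (T ^ M) x = ∑ k ∈ Finset.range M, (T ^ k) (A x) := by
    intro M x
    have := congrArg (fun (S : X →L[𝕜] X) => S x) (hgeom M)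
    simpa [ContinuousLinearMap.sum_apply, ContinuousLinearMap.mul_apply] using this
  -- P i vanishes on ker Q, so T fixes ker Q elements
  have hfix : ∀ (M : ℕ) (x : X), (T ^ M) (x - Q x) = x - Q x := by
    intro M x
    have hk : x - Q x ∈ LinearMap.ker (Q : X →ₗ[𝕜] X) := by
      simp [LinearMap.mem_ker, map_sub, hQ x]
    rw [hQker, Submodule.mem_iInf] at hk
    have hfix1 : T (x - Q x) = x - Q x := by
      rw [hT]
      simp only [ContinuousLinearMap.sub_apply, ContinuousLinearMap.one_apply, hA,
        ContinuousLinearMap.sum_apply]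
      have : ∀ i : Fin n, P i (x - Q x) = 0 := fun i => hk i
      simp [this]
    induction M with
    | zero => simp
    | succ M ih => rw [pow_succ, ContinuousLinearMap.mul_apply, hfix1, ih]
  set C : ℝ := (∑ i, w i) * Msup with hC
  intro N hN
  have hC0 : 0 ≤ C := mul_nonneg hwsum.le hM0
  refine ContinuousLinearMap.opNorm_le_bound _
    (mul_nonneg (mul_nonneg hwsum.le hM0)
      (div_nonneg (pow_nonneg hα0 N) (by linarith))) fun x => ?_
  -- decomposition of Q x
  obtain ⟨f, hf1, hf2⟩ := (Submodule.mem_iSup_iff_exists_finsupp Xs (Q x)).mp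
    (by rw [← hQrange]; exact ⟨x, rfl⟩)
  have hfsum : Q x = ∑ i, f i := by
    rw [← hf2, Finsupp.sum_fintype]; simp
  set c₀ : ℝ := ∑ i, ‖f i‖ / w i with hc₀
  have hc₀0 : 0 ≤ c₀ := Finset.sum_nonneg fun i _ => div_nonneg (norm_nonneg _) (hw i).le
  have hc₀b : ∀ i, ‖f i‖ ≤ c₀ * w i := by
    intro i
    have h1 : ‖f i‖ / w i ≤ c₀ :=
      Finset.single_le_sum (fun j _ => div_nonneg (norm_nonneg _) (hw j).le) (Finset.mem_univ i)
    calc ‖f i‖ = (‖f i‖ / w i) * w i := (div_mul_cancel₀ _ (hw i).ne').symm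
      _ ≤ c₀ * w i := mul_le_mul_of_nonneg_right h1 (hw i).le
  have hTQ : ∀ M : ℕ, ‖(T ^ M) (Q x)‖ ≤ c₀ * α ^ M * ∑ i, w i := by
    intro M
    obtain ⟨v', _, h2', h3'⟩ := keyN M c₀ hc₀0 (Q x) ⟨fun i => f i, hf1, hc₀b, hfsum⟩
    rw [h3']; exact normdecomp _ _ h2'
  -- limit of (1 - T^M) x is Q x
  have hlim : Filter.Tendsto (fun M : ℕ => x - (T ^ M) x) Filter.atTop (nhds (Q x)) := by
    have heq : ∀ M : ℕ, x - (T ^ M) x - Q x = -(T ^ M) (Q x) := by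
      intro M
      have : (T ^ M) (x - Q x) = (T ^ M) x - (T ^ M) (Q x) := map_sub _ _ _
      rw [hfix M x] at this
      have := this.symm
      calc x - (T ^ M) x - Q x = (x - Q x) - (T ^ M) x := by abel
        _ = ((T ^ M) x - (T ^ M) (Q x)) - (T ^ M) x := by rw [← this]
        _ = -(T ^ M) (Q x) := by abel
    rw [tendsto_iff_norm_sub_tendsto_zero]
    have hb : ∀ M : ℕ, ‖x - (T ^ M) x - Q x‖ ≤ (c₀ * ∑ i, w i) * α ^ M := by
      intro M
      rw [heq M, norm_neg]
      calc ‖(T ^ M) (Q x)‖ ≤ c₀ * α ^ M * ∑ i, w i := hTQ M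
        _ = (c₀ * ∑ i, w i) * α ^ M := by ring
    refine squeeze_zero (fun M => norm_nonneg _) hb ?_
    have := (tendsto_pow_atTop_nhds_zero_of_lt_one hα0 hα1).const_mul (c₀ * ∑ i, w i)
    simpa using this
  -- compare at stage N with stages M ≥ N
  have hdiff : ∀ M : ℕ, N ≤ M →
      ‖(x - (T ^ M) x) - (x - (T ^ N) x)‖ ≤ C * ‖x‖ * (α ^ N / (1 - α)) := by
    intro M hNM
    have : (x - (T ^ M) x) - (x - (T ^ N) x) = ∑ k ∈ Finset.Ico N M, (T ^ k) (A x) := by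
      rw [hpt M x, hpt N x, Finset.sum_Ico_eq_sub _ hNM]
    rw [this]
    calc ‖∑ k ∈ Finset.Ico N M, (T ^ k) (A x)‖
        ≤ ∑ k ∈ Finset.Ico N M, (Msup * ‖x‖) * α ^ k * ∑ i, w i :=
          norm_sum_le_of_le _ fun k _ => hTA x k
      _ = (C * ‖x‖) * ∑ k ∈ Finset.Ico N M, α ^ k := by
          rw [Finset.mul_sum]; exact Finset.sum_congr rfl fun k _ => by rw [hC]; ring
      _ ≤ (C * ‖x‖) * (α ^ N / (1 - α)) := by
          refine mul_le_mul_of_nonneg_left ?_ (by positivity)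
          exact geom_sum_Ico_le_of_lt_one hα0 hα1
      _ = C * ‖x‖ * (α ^ N / (1 - α)) := by ring
  -- conclude
  have hval : (1 - T ^ N - Q) x = -(Q x - (x - (T ^ N) x)) := by
    simp only [ContinuousLinearMap.sub_apply, ContinuousLinearMap.one_apply]
    abel
  have hnorm : ‖(1 - T ^ N - Q) x‖ = ‖Q x - (x - (T ^ N) x)‖ := by rw [hval, norm_neg]
  have hlim2 : Filter.Tendsto (fun M : ℕ => ‖(x - (T ^ M) x) - (x - (T ^ N) x)‖)
      Filter.atTop (nhds ‖Q x - (x - (T ^ N) x)‖) :=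
    ((hlim.sub tendsto_const_nhds).norm)
  have hfin : ‖Q x - (x - (T ^ N) x)‖ ≤ C * ‖x‖ * (α ^ N / (1 - α)) :=
    le_of_tendsto hlim2 (Filter.eventually_atTop.mpr ⟨N, hdiff⟩)
  rw [hnorm] at *
  calc ‖Q x - (x - (T ^ N) x)‖ ≤ C * ‖x‖ * (α ^ N / (1 - α)) := hfin
    _ = (∑ i, w i) * Msup * (α ^ N / (1 - α)) * ‖x‖ := by rw [hC]; ring
end

section
/- Let E be an n×n matrix with nonnegative entries and zero diagonal. Then r(E) < 1 if and only if every principal minor of the matrix I - E is positive. -/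
open Matrix Finset Function
open Filter

/-- All principal minors (via injections) are positive. -/
def MinorsPos {m : Type*} [Fintype m] (A : Matrix m m ℝ) : Prop :=
  ∀ (k : ℕ) (f : Fin k → m), Function.Injective f → 0 < (A.submatrix f f).det

lemma det_updateRow_single {k : ℕ} (M : Matrix (Fin (k+1)) (Fin (k+1)) ℝ)
    (a : Fin (k+1)) (c : ℝ) :
    (M.updateRow a (Pi.single a c)).det
      = c * (M.submatrix a.succAbove a.succAbove).det := by
  rw [Matrix.det_succ_row _ a]
  rw [Finset.sum_eq_single a]
  · have h1 : (M.updateRow a (Pi.single a c)) a a = c := by simp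
    have h2 : (M.updateRow a (Pi.single a c)).submatrix a.succAbove a.succAbove
        = M.submatrix a.succAbove a.succAbove := by
      ext i j
      simp [Matrix.submatrix_apply, Matrix.updateRow_apply, Fin.succAbove_ne a i]
    rw [h1, h2]
    have : ((a:ℕ) + (a:ℕ)) = 2 * (a:ℕ) := by ring
    rw [this, pow_mul]
    norm_num
  · intro j _ hj
    have : (M.updateRow a (Pi.single a c)) a j = 0 := by
      simp [Pi.single_apply, hj.symm]
    rw [this]; ring
  · intro h; exact absurd (Finset.mem_univ a) h

lemma minorsPos_submatrix {m m' : Type*} [Fintype m] [Fintype m'] {A : Matrix m m ℝ}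
    (hA : MinorsPos A) (g : m' → m) (hg : Function.Injective g) :
    MinorsPos (A.submatrix g g) := by
  intro k f hf
  rw [Matrix.submatrix_submatrix]
  exact hA k (g ∘ f) (hg.comp hf)

lemma det_pos_of_minorsPos {m : Type*} [Fintype m] [DecidableEq m] {A : Matrix m m ℝ}
    (hA : MinorsPos A) : 0 < A.det := by
  have e := (Fintype.equivFin m).symm
  have := hA (Fintype.card m) e e.injective
  rwa [Matrix.det_submatrix_equiv_self] at this

lemma det_add_diagonal_pos :
    ∀ (k : ℕ) (A : Matrix (Fin k) (Fin k) ℝ), MinorsPos A →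
      ∀ d : Fin k → ℝ, (∀ i, 0 ≤ d i) → 0 < (A + Matrix.diagonal d).det := by
  intro k
  induction k with
  | zero =>
    intro A hA d _
    simpa using det_pos_of_minorsPos hA
  | succ k ih =>
    intro A hA
    suffices H : ∀ s : Finset (Fin (k+1)), ∀ d : Fin (k+1) → ℝ, (∀ i, 0 ≤ d i) →
        (∀ i ∉ s, d i = 0) → 0 < (A + Matrix.diagonal d).det by
      intro d hd
      exact H Finset.univ d hd (fun i hi => absurd (Finset.mem_univ i) hi)
    intro s
    induction s using Finset.induction with
    | empty =>
      intro d _ hd0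
      have hz : d = 0 := funext fun i => hd0 i (Finset.notMem_empty i)
      subst hz
      rw [show Matrix.diagonal (0 : Fin (k+1) → ℝ) = 0 from Matrix.diagonal_zero, add_zero]
      exact det_pos_of_minorsPos hA
    | @insert a s ha ihs =>
      intro d hd hd0
      set d' : Fin (k+1) → ℝ := Function.update d a 0 with hd'
      have hdd : A + Matrix.diagonal d
          = (A + Matrix.diagonal d').updateRow a
              ((A + Matrix.diagonal d') a + Pi.single a (d a)) := by
        ext i j
        rcases eq_or_ne i a with rfl | hia
        · rw [Matrix.updateRow_self]
          by_cases hj : i = j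
          · subst hj
            simp [hd', Matrix.diagonal_apply_eq, Function.update_apply]
          · simp [hd', Matrix.diagonal_apply_ne _ hj, Function.update_apply,
              Pi.single_apply, Ne.symm hj, hj]
        · rw [Matrix.updateRow_ne hia]
          by_cases hj : i = j
          · subst hj
            simp [hd', Matrix.diagonal_apply_eq, Function.update_apply, hia]
          · simp [Matrix.diagonal_apply_ne _ hj]
      have hsplit : (A + Matrix.diagonal d).det
          = (A + Matrix.diagonal d').det
            + ((A + Matrix.diagonal d').updateRow a (Pi.single a (d a))).det := by
        rw [hdd]
        rw [Matrix.det_updateRow_add]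
        rw [Matrix.updateRow_eq_self]
      have h1 : 0 < (A + Matrix.diagonal d').det := by
        apply ihs
        · intro i
          by_cases hia : i = a
          · subst hia; simp [hd']
          · simpa [hd', Function.update_apply, hia] using hd i
        · intro i hi
          by_cases hia : i = a
          · subst hia; simp [hd']
          · have : i ∉ insert a s := by
              simp only [Finset.mem_insert, not_or]
              exact ⟨hia, hi⟩
            simpa [hd', Function.update_apply, hia] using hd0 i this
      have h2 : 0 ≤ ((A + Matrix.diagonal d').updateRow a (Pi.single a (d a))).det := by
        rw [det_updateRow_single]
        apply mul_nonneg (hd a)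
        have hsub : (A + Matrix.diagonal d').submatrix a.succAbove a.succAbove
            = A.submatrix a.succAbove a.succAbove + Matrix.diagonal (d' ∘ a.succAbove) := by
          ext i j
          simp only [Matrix.submatrix_apply, Matrix.add_apply, Matrix.diagonal_apply,
            Function.comp_apply]
          by_cases hj : i = j
          · subst hj; simp
          · have : a.succAbove i ≠ a.succAbove j := fun h =>
              hj (Fin.succAbove_right_injective h)
            simp [hj, this]
        rw [hsub]
        apply le_of_lt
        apply ih
        · exact minorsPos_submatrix hA _ Fin.succAbove_right_injective
        · intro i
          by_cases hia : a.succAbove i = a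
          · exact absurd hia (Fin.succAbove_ne a i)
          · simpa [hd', Function.update_apply, hia] using hd (a.succAbove i)
      linarith [hsplit, h1, h2]
lemma fiedler_ptak {n : ℕ} {A : Matrix (Fin n) (Fin n) ℝ} (hA : MinorsPos A)
    {x : Fin n → ℝ} (hx : x ≠ 0) : ∃ i, 0 < x i * A.mulVec x i := by
  by_contra hcon
  push_neg at hcon
  classical
  set S : Finset (Fin n) := Finset.univ.filter (fun i => x i ≠ 0) with hS
  let e := S.orderIsoOfFin rfl
  let f : Fin S.card → Fin n := fun i => (e i : Fin n)
  have hf : Function.Injective f := fun i j hij => e.injective (Subtype.ext hij)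
  have hfS : ∀ i, f i ∈ S := fun i => (e i).2
  have hfx : ∀ i, x (f i) ≠ 0 := fun i => (Finset.mem_filter.mp (hfS i)).2
  let B := A.submatrix f f
  let y : Fin S.card → ℝ := fun i => x (f i)
  let d : Fin S.card → ℝ := fun i => -(A.mulVec x (f i) / x (f i))
  have hd : ∀ i, 0 ≤ d i := by
    intro i
    have h1 : x (f i) * A.mulVec x (f i) ≤ 0 := hcon (f i)
    have h3 : A.mulVec x (f i) / x (f i) ≤ 0 := by
      rcases (hfx i).lt_or_gt with hneg | hpos
      · rw [div_nonpos_iff]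
        left
        refine ⟨?_, hneg.le⟩
        by_contra hcc
        push_neg at hcc
        nlinarith [mul_pos_of_neg_of_neg hneg hcc]
      · rw [div_nonpos_iff]
        right
        refine ⟨?_, hpos.le⟩
        nlinarith [h1]
    simpa [d] using neg_nonneg.mpr h3
  -- sum identity
  have hsum : ∀ i : Fin S.card,
      (∑ j, A (f i) (f j) * x (f j)) = A.mulVec x (f i) := by
    intro i
    have h1 : A.mulVec x (f i) = ∑ j ∈ S, A (f i) j * x j := by
      rw [Matrix.mulVec, dotProduct]
      symm
      apply Finset.sum_subset (Finset.subset_univ S)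
      intro j _ hj
      have : x j = 0 := by
        by_contra hxj
        exact hj (Finset.mem_filter.mpr ⟨Finset.mem_univ j, hxj⟩)
      simp [this]
    rw [h1, ← Finset.sum_coe_sort S (fun j => A (f i) j * x j)]
    exact Equiv.sum_comp e.toEquiv (fun j : S => A (f i) (j : Fin n) * x (j : Fin n))
  have hker : (B + Matrix.diagonal d).mulVec y = 0 := by
    funext i
    have : (B + Matrix.diagonal d).mulVec y i
        = (∑ j, A (f i) (f j) * x (f j)) + d i * y i := by
      rw [Matrix.add_mulVec, Pi.add_apply, Matrix.mulVec_diagonal]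
      congr 1
    rw [this, hsum i]
    have : d i * y i = -(A.mulVec x (f i)) := by
      simp only [d, y]
      rw [neg_mul, div_mul_cancel₀ _ (hfx i)]
    rw [this]
    simp
  have hy : y ≠ 0 := by
    obtain ⟨i0, hi0⟩ := Function.ne_iff.mp hx
    have hi0S : i0 ∈ S := Finset.mem_filter.mpr ⟨Finset.mem_univ _, hi0⟩
    intro h
    have := congrFun h (e.symm ⟨i0, hi0S⟩)
    simp only [y, f, Pi.zero_apply] at this
    rw [OrderIso.apply_symm_apply] at this
    exact hi0 this
  have hdet0 : (B + Matrix.diagonal d).det = 0 :=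
    Matrix.exists_mulVec_eq_zero_iff.mp ⟨y, hy, hker⟩
  have hdetpos : 0 < (B + Matrix.diagonal d).det :=
    det_add_diagonal_pos _ B (minorsPos_submatrix hA f hf) d hd
  rw [hdet0] at hdetpos
  exact lt_irrefl 0 hdetpos
attribute [local instance] Matrix.linftyOpNormedRing Matrix.linftyOpNormedAlgebra

lemma no_superfixed_vector {n : ℕ} (E : Matrix (Fin n) (Fin n) ℝ) (hE : ∀ i j, 0 ≤ E i j)
    (hspec : ∀ z ∈ spectrum ℂ (E.map (Complex.ofReal · : ℝ → ℂ)), ‖z‖ < 1)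
    (w : Fin n → ℝ) (hw0 : ∀ i, 0 ≤ w i) (hww : ∀ i, w i ≤ E.mulVec w i) : w = 0 := by
  classical
  by_contra hwne
  obtain ⟨i₀, hi₀⟩ := Function.ne_iff.mp hwne
  have hwi₀ : 0 < w i₀ := (hw0 i₀).lt_of_ne (Ne.symm hi₀)
  set M : Matrix (Fin n) (Fin n) ℂ := E.map (Complex.ofReal · : ℝ → ℂ) with hM
  -- spectral radius < 1
  have hfin := Matrix.finite_spectrum M
  set c : NNReal := hfin.toFinset.sup (fun z => ‖z‖₊) with hc
  have hc1 : c < 1 := by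
    rw [hc, Finset.sup_lt_iff (by norm_num : (0:NNReal) < 1)]
    intro z hz
    have h := hspec z (hfin.mem_toFinset.mp hz)
    exact_mod_cast h
  have hsr : spectralRadius ℂ M < 1 := by
    have hle : spectralRadius ℂ M ≤ (c : ENNReal) := by
      rw [spectralRadius]
      refine iSup₂_le fun z hz => ?_
      exact ENNReal.coe_le_coe.mpr (Finset.le_sup (hfin.mem_toFinset.mpr hz))
    exact lt_of_le_of_lt hle (by exact_mod_cast hc1)
  -- Gelfand: ‖M ^ k‖ → 0
  obtain ⟨ρ, hρ1, hρ2⟩ := exists_between hsr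
  have hρtop : ρ ≠ ⊤ := (hρ2.trans (by norm_num)).ne
  set ρn : NNReal := ρ.toNNReal with hρn
  have hρcoe : (ρn : ENNReal) = ρ := ENNReal.coe_toNNReal hρtop
  have hρn1 : (ρn : ℝ) < 1 := by
    have : (ρn : ENNReal) < 1 := hρcoe ▸ hρ2
    exact_mod_cast this
  have hev : ∀ᶠ (k : ℕ) in atTop, (‖M ^ k‖₊ : ENNReal) ^ (1/(k:ℝ)) < ρ :=
    (spectrum.pow_nnnorm_pow_one_div_tendsto_nhds_spectralRadius M).eventually_lt_const hρ1
  have hbound : ∀ᶠ k in atTop, ‖M ^ k‖ ≤ (ρn : ℝ) ^ k := by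
    filter_upwards [hev, eventually_ge_atTop 1] with k hk hk1
    have hkne : (k : ℝ) ≠ 0 := Nat.cast_ne_zero.mpr (Nat.one_le_iff_ne_zero.mp hk1)
    have h1 : ((‖M ^ k‖₊ : ENNReal) ^ (1/(k:ℝ))) ^ (k:ℝ) ≤ ρ ^ (k:ℝ) :=
      ENNReal.rpow_le_rpow hk.le (Nat.cast_nonneg k)
    rw [← ENNReal.rpow_mul, one_div_mul_cancel hkne, ENNReal.rpow_one] at h1
    rw [← hρcoe, ENNReal.rpow_natCast, ← ENNReal.coe_pow, ENNReal.coe_le_coe] at h1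
    have := NNReal.coe_le_coe.mpr h1
    rwa [NNReal.coe_pow, coe_nnnorm] at this
  have htend0 : Tendsto (fun k : ℕ => ‖M ^ k‖) atTop (nhds 0) :=
    squeeze_zero' (Eventually.of_forall fun k => norm_nonneg _) hbound
      (tendsto_pow_atTop_nhds_zero_of_lt_one (ρn.coe_nonneg) hρn1)
  -- power bound on w
  have hmono : ∀ u v : Fin n → ℝ, (∀ i, u i ≤ v i) → ∀ i, E.mulVec u i ≤ E.mulVec v i := by
    intro u v huv i
    simp only [Matrix.mulVec, dotProduct]
    exact Finset.sum_le_sum fun j _ => mul_le_mul_of_nonneg_left (huv j) (hE i j)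
  have hpow : ∀ k : ℕ, ∀ i, w i ≤ (E ^ k).mulVec w i := by
    intro k
    induction k with
    | zero => intro i; simp [Matrix.one_mulVec]
    | succ k ihk =>
      intro i
      have h1 : w i ≤ E.mulVec w i := hww i
      have h2 : E.mulVec w i ≤ E.mulVec ((E ^ k).mulVec w) i := hmono _ _ ihk i
      calc w i ≤ E.mulVec ((E ^ k).mulVec w) i := le_trans h1 h2
        _ = (E ^ (k+1)).mulVec w i := by
            rw [Matrix.mulVec_mulVec, ← pow_succ']
  -- entrywise bound by the norm
  set C : ℝ := ∑ j, w j with hC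
  have hwC : ∀ j, w j ≤ C := by
    intro j
    exact Finset.single_le_sum (fun j _ => hw0 j) (Finset.mem_univ j)
  have hCpos : 0 < C := lt_of_lt_of_le hwi₀ (hwC i₀)
  have hMk : ∀ k : ℕ, M ^ k = (E ^ k).map (Complex.ofReal · : ℝ → ℂ) := by
    intro k
    have : M = Complex.ofRealHom.mapMatrix E := rfl
    rw [this, ← map_pow]
    rfl
  have hentry : ∀ k : ℕ, (E ^ k).mulVec w i₀ ≤ ‖M ^ k‖ * C := by
    intro k
    have h1 : (∑ j, ‖(M ^ k) i₀ j‖₊) ≤ ‖M ^ k‖₊ := by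
      rw [Matrix.linfty_opNNNorm_def]
      exact Finset.le_sup (f := fun i => ∑ j, ‖(M ^ k) i j‖₊) (Finset.mem_univ i₀)
    have h2 : (∑ j, ‖(M ^ k) i₀ j‖) ≤ ‖M ^ k‖ := by
      have := NNReal.coe_le_coe.mpr h1
      rwa [NNReal.coe_sum, coe_nnnorm] at this
      -- note: summands coerce
    have h3 : ∀ j, ‖(M ^ k) i₀ j‖ = |(E ^ k) i₀ j| := by
      intro j
      rw [hMk k]
      simp [Matrix.map_apply, Complex.norm_real, Real.norm_eq_abs]
    calc (E ^ k).mulVec w i₀ = ∑ j, (E ^ k) i₀ j * w j := rfl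
      _ ≤ ∑ j, |(E ^ k) i₀ j| * C := by
          refine Finset.sum_le_sum fun j _ => ?_
          calc (E ^ k) i₀ j * w j ≤ |(E ^ k) i₀ j| * w j :=
                mul_le_mul_of_nonneg_right (le_abs_self _) (hw0 j)
            _ ≤ |(E ^ k) i₀ j| * C :=
                mul_le_mul_of_nonneg_left (hwC j) (abs_nonneg _)
      _ = (∑ j, |(E ^ k) i₀ j|) * C := by rw [Finset.sum_mul]
      _ ≤ ‖M ^ k‖ * C := by
          apply mul_le_mul_of_nonneg_right _ hCpos.le
          calc (∑ j, |(E ^ k) i₀ j|) = ∑ j, ‖(M ^ k) i₀ j‖ := by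
                refine Finset.sum_congr rfl fun j _ => (h3 j).symm
            _ ≤ ‖M ^ k‖ := h2
  -- contradiction
  have hεpos : 0 < w i₀ / C := div_pos hwi₀ hCpos
  obtain ⟨k, hk⟩ := (htend0.eventually_lt_const hεpos).exists
  have : w i₀ < w i₀ := by
    calc w i₀ ≤ (E ^ k).mulVec w i₀ := hpow k i₀
      _ ≤ ‖M ^ k‖ * C := hentry k
      _ < (w i₀ / C) * C := mul_lt_mul_of_pos_right hk hCpos
      _ = w i₀ := div_mul_cancel₀ _ hCpos.ne'
  exact lt_irrefl _ this

/-- For an `n × n` real matrix `E` with nonnegative entries and zero diagonal, the spectral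
radius of `E` is `< 1` iff every principal minor of `I - E` is positive. -/
theorem spectralRadius_lt_one_iff_principal_minors_pos {n : ℕ}
    (E : Matrix (Fin n) (Fin n) ℝ) (hE : ∀ i j, 0 ≤ E i j) (hdiag : ∀ i, E i i = 0) :
    (∀ z ∈ spectrum ℂ (E.map (Complex.ofReal · : ℝ → ℂ)), ‖z‖ < 1) ↔
      ∀ S : Finset (Fin n),
        0 < ((1 - E).submatrix (fun i : S => (i : Fin n)) fun i : S => (i : Fin n)).det := by
  classical
  constructor
  · -- spectral radius < 1 → minors positive
    intro hspec S
    set ES : Matrix {x // x ∈ S} {x // x ∈ S} ℝ :=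
      E.submatrix (fun i : S => (i : Fin n)) (fun i : S => (i : Fin n)) with hES
    have hkey : ∀ t ∈ Set.Icc (0:ℝ) 1, ((1 : Matrix S S ℝ) - t • ES).det ≠ 0 := by
      intro t ht hdet
      obtain ⟨v, hv0, hveq⟩ := Matrix.exists_mulVec_eq_zero_iff.mpr hdet
      rw [Matrix.sub_mulVec, Matrix.one_mulVec, Matrix.smul_mulVec] at hveq
      have hveq' : ∀ i', v i' = t * ES.mulVec v i' := by
        intro i'
        have h := congrFun hveq i'
        simp only [Pi.sub_apply, Pi.zero_apply, Pi.smul_apply, smul_eq_mul] at h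
        linarith
      rcases eq_or_lt_of_le ht.1 with ht0 | ht0
      · apply hv0
        funext i'
        rw [hveq' i', ← ht0, zero_mul]
        rfl
      · set w : Fin n → ℝ := fun j => if h : j ∈ S then |v ⟨j, h⟩| else 0 with hw
        have hw0 : ∀ j, 0 ≤ w j := by
          intro j
          rw [hw]
          by_cases h : j ∈ S <;> simp [h, abs_nonneg]
        have hwval : ∀ j : {x // x ∈ S}, w (j : Fin n) = |v j| := by
          intro j
          rw [hw]
          simp [j.2]
        have hwne : w ≠ 0 := by
          obtain ⟨i', hi'⟩ := Function.ne_iff.mp hv0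
          refine Function.ne_iff.mpr ⟨(i' : Fin n), ?_⟩
          rw [hwval i']
          simpa using hi'
        have hEw : ∀ i, w i ≤ E.mulVec w i := by
          intro i
          have hnn : ∀ j : Fin n, 0 ≤ E i j * w j := fun j => mul_nonneg (hE i j) (hw0 j)
          by_cases hiS : i ∈ S
          · set i' : {x // x ∈ S} := ⟨i, hiS⟩ with hi'
            have h1 : |v i'| ≤ ∑ j : {x // x ∈ S}, E i (j : Fin n) * |v j| := by
              rw [hveq' i', abs_mul, abs_of_pos ht0]
              calc t * |ES.mulVec v i'|
                  ≤ t * ∑ j : {x // x ∈ S}, E i (j : Fin n) * |v j| := by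
                    apply mul_le_mul_of_nonneg_left _ ht0.le
                    calc |ES.mulVec v i'| ≤ ∑ j, |ES i' j * v j| :=
                          Finset.abs_sum_le_sum_abs _ _
                      _ = ∑ j : {x // x ∈ S}, E i (j : Fin n) * |v j| := by
                          refine Finset.sum_congr rfl fun j _ => ?_
                          rw [abs_mul]
                          congr 1
                          exact abs_of_nonneg (hE i (j : Fin n))
                _ ≤ 1 * ∑ j : {x // x ∈ S}, E i (j : Fin n) * |v j| := by
                    apply mul_le_mul_of_nonneg_right ht.2
                    exact Finset.sum_nonneg fun j _ => mul_nonneg (hE i _) (abs_nonneg _)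
                _ = ∑ j : {x // x ∈ S}, E i (j : Fin n) * |v j| := one_mul _
            have h2 : (∑ j : {x // x ∈ S}, E i (j : Fin n) * |v j|)
                = ∑ j ∈ S, E i j * w j := by
              rw [← Finset.sum_coe_sort S (fun j => E i j * w j)]
              exact Finset.sum_congr rfl fun j _ => by rw [hwval j]
            have h3 : (∑ j ∈ S, E i j * w j) ≤ ∑ j : Fin n, E i j * w j :=
              Finset.sum_le_sum_of_subset_of_nonneg (Finset.subset_univ S)
                (fun j _ _ => hnn j)
            have hwi : w i = |v i'| := by
              rw [hw]; simp [hiS, hi']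
            calc w i = |v i'| := hwi
              _ ≤ ∑ j : {x // x ∈ S}, E i (j : Fin n) * |v j| := h1
              _ = ∑ j ∈ S, E i j * w j := h2
              _ ≤ ∑ j : Fin n, E i j * w j := h3
              _ = E.mulVec w i := rfl
          · have hz : w i = 0 := by rw [hw]; simp [hiS]
            rw [hz]
            have hnn2 : (0:ℝ) ≤ ∑ j : Fin n, E i j * w j :=
              Finset.sum_nonneg fun j _ => hnn j
            exact hnn2
        exact hwne (no_superfixed_vector E hE hspec w hw0 hEw)
    have hcont : Continuous fun t : ℝ => ((1 : Matrix S S ℝ) - t • ES).det :=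
      (continuous_const.sub (continuous_id.smul continuous_const)).matrix_det
    have hf0 : ((1 : Matrix S S ℝ) - (0:ℝ) • ES).det = 1 := by simp
    have hgoal : 0 < ((1 : Matrix S S ℝ) - (1:ℝ) • ES).det := by
      rcases lt_trichotomy (((1 : Matrix S S ℝ) - (1:ℝ) • ES).det) 0 with hlt | heq | hpos
      · exfalso
        have hsub := intermediate_value_Icc' (zero_le_one (α := ℝ)) hcont.continuousOn
        have h0mem : (0:ℝ) ∈ Set.Icc (((1 : Matrix S S ℝ) - (1:ℝ) • ES).det)
            (((1 : Matrix S S ℝ) - (0:ℝ) • ES).det) := ⟨hlt.le, by rw [hf0]; norm_num⟩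
        obtain ⟨t, htmem, hteq⟩ := hsub h0mem
        exact hkey t htmem hteq
      · exact absurd heq (hkey 1 ⟨zero_le_one, le_refl 1⟩)
      · exact hpos
    have hrw : (1 - E).submatrix (fun i : S => (i : Fin n)) (fun i : S => (i : Fin n))
        = (1 : Matrix S S ℝ) - (1:ℝ) • ES := by
      rw [one_smul]
      ext i j
      simp [Matrix.submatrix_apply, Matrix.sub_apply, Matrix.one_apply, hES]
    rw [hrw]
    exact hgoal
  · -- minors positive → spectral radius < 1
    intro hminors z hz
    by_contra hlt
    push_neg at hlt
    have hMP : MinorsPos (1 - E) := by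
      intro k f hf
      set S : Finset (Fin n) := Finset.univ.image f with hS
      have hcard : Fintype.card {x // x ∈ S} = k := by
        rw [Fintype.card_coe, hS, Finset.card_image_of_injective _ hf, Finset.card_univ,
          Fintype.card_fin]
      set g : Fin k → {x // x ∈ S} := fun i => ⟨f i, by simp [hS]⟩ with hg
      have hginj : Function.Injective g := fun i j hij => hf (congrArg Subtype.val hij)
      have hgbij : Function.Bijective g :=
        (Fintype.bijective_iff_injective_and_card g).mpr
          ⟨hginj, by rw [Fintype.card_fin, hcard]⟩
      have hrw : (1 - E).submatrix f f
          = ((1 - E).submatrix (fun i : S => (i : Fin n))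
              (fun i : S => (i : Fin n))).submatrix (Equiv.ofBijective g hgbij)
                (Equiv.ofBijective g hgbij) := by
        rw [Matrix.submatrix_submatrix]
        rfl
      rw [hrw, Matrix.det_submatrix_equiv_self]
      exact hminors S
    set M : Matrix (Fin n) (Fin n) ℂ := E.map (Complex.ofReal · : ℝ → ℂ) with hM
    rw [spectrum.mem_iff] at hz
    have hdet0 : ((algebraMap ℂ (Matrix (Fin n) (Fin n) ℂ)) z - M).det = 0 := by
      by_contra hne
      exact hz ((Matrix.isUnit_iff_isUnit_det _).mpr (isUnit_iff_ne_zero.mpr hne))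
    obtain ⟨v, hv0, hveq⟩ := Matrix.exists_mulVec_eq_zero_iff.mpr hdet0
    have hMv : M.mulVec v = z • v := by
      rw [Matrix.sub_mulVec] at hveq
      have h2 : ((algebraMap ℂ (Matrix (Fin n) (Fin n) ℂ)) z).mulVec v = z • v := by
        rw [Algebra.algebraMap_eq_smul_one, Matrix.smul_mulVec, Matrix.one_mulVec]
      rw [h2] at hveq
      exact (sub_eq_zero.mp hveq).symm
    set w : Fin n → ℝ := fun i => ‖v i‖ with hw
    have hw0 : ∀ i, 0 ≤ w i := fun i => norm_nonneg _
    have hwne : w ≠ 0 := by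
      obtain ⟨i, hi⟩ := Function.ne_iff.mp hv0
      refine Function.ne_iff.mpr ⟨i, ?_⟩
      simpa [hw] using hi
    have hEw : ∀ i, w i ≤ E.mulVec w i := by
      intro i
      have h1 : ‖M.mulVec v i‖ = ‖z‖ * w i := by
        rw [hMv]
        simp [hw, norm_smul]
      have h2 : ‖M.mulVec v i‖ ≤ E.mulVec w i := by
        calc ‖∑ j, M i j * v j‖ ≤ ∑ j, ‖M i j * v j‖ := norm_sum_le _ _
          _ = ∑ j, E i j * w j := by
              refine Finset.sum_congr rfl fun j _ => ?_
              rw [norm_mul, hM]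
              simp [Matrix.map_apply, Complex.norm_real, Real.norm_eq_abs,
                abs_of_nonneg (hE i j), hw]
          _ = E.mulVec w i := rfl
      calc w i = 1 * w i := (one_mul _).symm
        _ ≤ ‖z‖ * w i := mul_le_mul_of_nonneg_right hlt (hw0 i)
        _ = ‖M.mulVec v i‖ := h1.symm
        _ ≤ E.mulVec w i := h2
    obtain ⟨i, hi⟩ := fiedler_ptak hMP hwne
    have hnp : (1 - E).mulVec w i ≤ 0 := by
      rw [Matrix.sub_mulVec, Pi.sub_apply, Matrix.one_mulVec]
      linarith [hEw i]
    nlinarith [hw0 i, hi, hnp]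
end

section
/- Let (Ω, F, μ) be a probability space and A, B sub-σ-algebras of F. Define ψ'(A,B) = inf{ μ(A∩B)/(μ(A)μ(B)) : A ∈ A, B ∈ B, μ(A) > 0, μ(B) > 0 }. Then 0 ≤ ψ'(A,B) ≤ 1, and ψ'(A,B) = 1 if and only if A and B are independent. -/
open MeasureTheory

/-- The dependence coefficient
`ψ'(𝒜, ℬ) = inf { μ(A ∩ B) / (μ A * μ B) : A ∈ 𝒜, B ∈ ℬ, μ A > 0, μ B > 0 }`,
interpreted as `1` when no such pair of sets exists. -/
noncomputable def psi' {Ω : Type*} {m0 : MeasurableSpace Ω} (μ : Measure Ω)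
    (mA mB : MeasurableSpace Ω) : ℝ :=
  open Classical in
  letI S : Set ℝ := {r | ∃ A B, MeasurableSet[mA] A ∧ MeasurableSet[mB] B ∧
    0 < μ A ∧ 0 < μ B ∧ r = (μ (A ∩ B)).toReal / ((μ A).toReal * (μ B).toReal)}
  if S.Nonempty then sInf S else 1

/-- `0 ≤ ψ'(𝒜, ℬ) ≤ 1`, and `ψ'(𝒜, ℬ) = 1` iff `𝒜` and `ℬ` are independent. -/
theorem psi'_mem_Icc_and_eq_one_iff_indep {Ω : Type*} {m0 : MeasurableSpace Ω}
    (μ : Measure Ω) [IsProbabilityMeasure μ]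
    (mA mB : MeasurableSpace Ω) (hA : mA ≤ m0) (hB : mB ≤ m0) :
    0 ≤ psi' μ mA mB ∧ psi' μ mA mB ≤ 1 ∧
      (psi' μ mA mB = 1 ↔
        ∀ A B, MeasurableSet[mA] A → MeasurableSet[mB] B → μ (A ∩ B) = μ A * μ B) := by
  classical
  set S : Set ℝ := {r | ∃ A B, MeasurableSet[mA] A ∧ MeasurableSet[mB] B ∧
    0 < μ A ∧ 0 < μ B ∧ r = (μ (A ∩ B)).toReal / ((μ A).toReal * (μ B).toReal)} with hSdef
  have hone : (1:ℝ) ∈ S := by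
    refine ⟨Set.univ, Set.univ, MeasurableSet.univ, MeasurableSet.univ, by simp, by simp, by simp⟩
  have hne : S.Nonempty := ⟨1, hone⟩
  have hnonneg : ∀ r ∈ S, (0:ℝ) ≤ r := by
    rintro r ⟨A, B, _, _, _, _, rfl⟩
    positivity
  have hbdd : BddBelow S := ⟨0, hnonneg⟩
  have hpsi : psi' μ mA mB = sInf S := by
    rw [psi']
    exact if_pos hne
  refine ⟨?_, ?_, ?_⟩
  · rw [hpsi]
    exact Real.sInf_nonneg hnonneg
  · rw [hpsi]
    exact csInf_le hbdd hone
  · rw [hpsi]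
    constructor
    · intro h
      have key : ∀ A B, MeasurableSet[mA] A → MeasurableSet[mB] B →
          μ A * μ B ≤ μ (A ∩ B) := by
        intro A B hAm hBm
        rcases eq_or_lt_of_le (by positivity : (0:ENNReal) ≤ μ A) with h0 | hApos
        · simp [← h0]
        rcases eq_or_lt_of_le (by positivity : (0:ENNReal) ≤ μ B) with h0 | hBpos
        · simp [← h0]
        have hr : (1:ℝ) ≤ (μ (A ∩ B)).toReal / ((μ A).toReal * (μ B).toReal) := by
          rw [← h]; exact csInf_le hbdd ⟨A, B, hAm, hBm, hApos, hBpos, rfl⟩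
        have hpa : 0 < (μ A).toReal := ENNReal.toReal_pos hApos.ne' (measure_ne_top μ A)
        have hpb : 0 < (μ B).toReal := ENNReal.toReal_pos hBpos.ne' (measure_ne_top μ B)
        have h2 : (μ A).toReal * (μ B).toReal ≤ (μ (A ∩ B)).toReal :=
          (one_le_div (by positivity)).mp hr
        rw [← ENNReal.toReal_mul] at h2
        exact (ENNReal.toReal_le_toReal (by finiteness) (measure_ne_top μ _)).mp h2
      intro A B hAm hBm
      by_cases hA0 : μ A = 0
      · simp [measure_mono_null Set.inter_subset_left hA0, hA0]
      by_cases hB0 : μ B = 0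
      · simp [measure_mono_null Set.inter_subset_right hB0, hB0]
      refine le_antisymm ?_ (key A B hAm hBm)
      have h1 : μ (A ∩ B) + μ (A \ B) = μ A := measure_inter_add_diff A (hB B hBm)
      have h2 : μ A * μ B + μ A * μ Bᶜ = μ A := by
        rw [← mul_add, measure_add_measure_compl (hB B hBm), measure_univ, mul_one]
      have h3 : μ A * μ Bᶜ ≤ μ (A \ B) := by
        have := key A Bᶜ hAm hBm.compl
        simpa [Set.diff_eq] using this
      have h4 : μ (A ∩ B) + μ (A \ B) ≤ μ A * μ B + μ (A \ B) := by
        calc μ (A ∩ B) + μ (A \ B) = μ A := h1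
          _ = μ A * μ B + μ A * μ Bᶜ := h2.symm
          _ ≤ μ A * μ B + μ (A \ B) := by gcongr
      exact (ENNReal.add_le_add_iff_right (measure_ne_top μ _)).mp h4
    · intro hind
      refine le_antisymm (csInf_le hbdd hone) (le_csInf hne ?_)
      rintro r ⟨A, B, hAm, hBm, hApos, hBpos, rfl⟩
      have hpa : 0 < (μ A).toReal := ENNReal.toReal_pos hApos.ne' (measure_ne_top μ A)
      have hpb : 0 < (μ B).toReal := ENNReal.toReal_pos hBpos.ne' (measure_ne_top μ B)
      rw [hind A B hAm hBm, ENNReal.toReal_mul, div_self (by positivity)]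
end

section
/- Let (Ω, F, μ) be a probability space, A, B sub-σ-algebras, c = ψ'(A,B), and p ∈ [1,∞]. Then for every A-measurable ξ ∈ L^p with Eξ = 0, one has ‖E(ξ | B)‖_p ≤ (1 - c) ‖ξ‖_p. -/
open MeasureTheory
open scoped ENNReal

section Auxiliary

open Real Filter
open scoped Topology

set_option linter.unusedSectionVars false

private lemma tangent_le {r : ℝ} (hr : 1 ≤ r) {t : ℝ} (ht : 0 ≤ t) (x : ℝ) :
    t ^ r + r * t ^ (r - 1) * (x - t) ≤ |x| ^ r := by
  have hr0 : (0:ℝ) < r := lt_of_lt_of_le one_pos hr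
  rcases eq_or_lt_of_le ht with h0 | htpos
  · rcases eq_or_lt_of_le hr with h1 | h1
    · simp only [← h0, ← h1]
      simp [Real.rpow_one, Real.zero_rpow, Real.rpow_zero]
      exact le_abs_self x
    · simp only [← h0]
      rw [Real.zero_rpow (ne_of_gt hr0), Real.zero_rpow (by linarith : r - 1 ≠ 0)]
      have : (0:ℝ) ≤ |x| ^ r := Real.rpow_nonneg (abs_nonneg x) r
      simpa using this
  · have hslope : 0 ≤ r * t ^ (r - 1) := by positivity
    have hx : x ≤ |x| := le_abs_self x
    have step : t ^ r + r * t ^ (r - 1) * (|x| - t) ≤ |x| ^ r := by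
      have hs : -1 ≤ |x| / t - 1 := by
        have : 0 ≤ |x| / t := div_nonneg (abs_nonneg x) ht
        linarith
      have hb := one_add_mul_self_le_rpow_one_add hs hr
      have h1 : (1 + (|x| / t - 1)) = |x| / t := by ring
      rw [h1] at hb
      have hb2 : t ^ r * (1 + r * (|x| / t - 1)) ≤ t ^ r * (|x| / t) ^ r :=
        mul_le_mul_of_nonneg_left hb (Real.rpow_nonneg ht r)
      have hdiv : t ^ r * (|x| / t) ^ r = |x| ^ r := by
        rw [Real.div_rpow (abs_nonneg x) ht]
        field_simp
      rw [hdiv] at hb2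
      refine le_trans (le_of_eq ?_) hb2
      have h4 : t ^ (r - 1) * t = t ^ r := by
        rw [← Real.rpow_add_one (ne_of_gt htpos) (r - 1)]; ring_nf
      have ht' : t ≠ 0 := ne_of_gt htpos
      field_simp
      linear_combination (r * (|x| - t)) * h4
    calc t ^ r + r * t ^ (r - 1) * (x - t)
        ≤ t ^ r + r * t ^ (r - 1) * (|x| - t) := by nlinarith [hslope, hx]
      _ ≤ |x| ^ r := step

private lemma pointwise_jensen {r d v F : ℝ} (hr : 1 ≤ r) (hd : 0 < d) (hv : 0 ≤ v)
    (H : ∀ q : ℚ, 0 ≤ (q : ℝ) →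
      r * (q : ℝ) ^ (r - 1) * v - d * ((r - 1) * (q : ℝ) ^ r) ≤ F) :
    v ^ r ≤ d ^ (r - 1) * F := by
  have hr0 : (0:ℝ) < r := lt_of_lt_of_le one_pos hr
  have hb : (0:ℝ) < d ^ (r - 1) := Real.rpow_pos_of_pos hd _
  rcases eq_or_lt_of_le hv with h0 | hvpos
  · have hF : 0 ≤ F := by
      have := H 0 (by norm_num)
      simpa [← h0, Real.zero_rpow (ne_of_gt hr0)] using this
    rw [← h0, Real.zero_rpow (ne_of_gt hr0)]
    positivity
  · set s : ℝ := v / d with hs_def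
    have hspos : 0 < s := div_pos hvpos hd
    have hq : ∀ n : ℕ, ∃ q : ℚ, s < (q:ℝ) ∧ (q:ℝ) < s + 1 / (n + 1) := by
      intro n
      obtain ⟨q, h1, h2⟩ := exists_rat_btwn (show s < s + 1 / (n + 1) by
        have : (0:ℝ) < 1 / (n + 1) := by positivity
        linarith)
      exact ⟨q, h1, h2⟩
    choose q hq1 hq2 using hq
    have htend : Tendsto (fun n : ℕ => ((q n : ℝ))) atTop (𝓝 s) := by
      have h1 : Tendsto (fun n : ℕ => s + 1 / (n + 1 : ℝ)) atTop (𝓝 s) := by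
        have := tendsto_one_div_add_atTop_nhds_zero_nat (𝕜 := ℝ)
        simpa using tendsto_const_nhds.add this
      exact tendsto_of_tendsto_of_tendsto_of_le_of_le tendsto_const_nhds h1
        (fun n => (hq1 n).le) (fun n => (hq2 n).le)
    have hG : Tendsto (fun n : ℕ =>
        r * ((q n : ℝ)) ^ (r - 1) * v - d * ((r - 1) * ((q n : ℝ)) ^ r)) atTop
        (𝓝 (r * s ^ (r - 1) * v - d * ((r - 1) * s ^ r))) := by
      have : ContinuousAt (fun t : ℝ =>
          r * t ^ (r - 1) * v - d * ((r - 1) * t ^ r)) s := by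
        fun_prop (disch := exact Or.inl (ne_of_gt hspos))
      exact this.tendsto.comp htend
    have hFge : r * s ^ (r - 1) * v - d * ((r - 1) * s ^ r) ≤ F :=
      le_of_tendsto hG (Filter.Eventually.of_forall fun n =>
        H (q n) (le_of_lt (lt_trans hspos (hq1 n))))
    have h3 : v ^ (r - 1) * v = v ^ r := by
      rw [← Real.rpow_add_one (ne_of_gt hvpos) (r - 1)]; ring_nf
    have h4 : d ^ (r - 1) * d = d ^ r := by
      rw [← Real.rpow_add_one (ne_of_gt hd) (r - 1)]; ring_nf
    have h1 : s ^ (r - 1) = v ^ (r - 1) / d ^ (r - 1) := Real.div_rpow hv hd.le _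
    have h2 : s ^ r = v ^ r / d ^ r := Real.div_rpow hv hd.le _
    have hval : r * s ^ (r - 1) * v - d * ((r - 1) * s ^ r) = v ^ r / d ^ (r - 1) := by
      rw [h1, h2, ← h4, ← h3]
      have hb' : d ^ (r - 1) ≠ 0 := ne_of_gt hb
      field_simp
      ring
    rw [hval] at hFge
    calc v ^ r = d ^ (r - 1) * (v ^ r / d ^ (r - 1)) := by field_simp
      _ ≤ d ^ (r - 1) * F := mul_le_mul_of_nonneg_left hFge hb.le

variable {Ω : Type*} {m0 : MeasurableSpace Ω} (μ : Measure Ω) [IsProbabilityMeasure μ]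
  (mA mB : MeasurableSpace Ω)

private lemma psi'_nonneg : 0 ≤ psi' μ mA mB := by
  rw [psi']
  split
  · apply Real.sInf_nonneg
    rintro x ⟨A, B, _, _, _, _, rfl⟩
    positivity
  · norm_num

private lemma psi'_le_one : psi' μ mA mB ≤ 1 := by
  have hmem : (1:ℝ) ∈ {r | ∃ A B, MeasurableSet[mA] A ∧ MeasurableSet[mB] B ∧
      0 < μ A ∧ 0 < μ B ∧ r = (μ (A ∩ B)).toReal / ((μ A).toReal * (μ B).toReal)} := by
    refine ⟨Set.univ, Set.univ, MeasurableSet.univ, MeasurableSet.univ, ?_, ?_, ?_⟩ <;>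
      simp [measure_univ]
  rw [psi']
  split
  case isTrue h =>
    apply csInf_le
    · refine ⟨0, ?_⟩
      rintro x ⟨A, B, _, _, _, _, rfl⟩
      positivity
    · exact hmem
  case isFalse h => exact absurd ⟨_, hmem⟩ h

private lemma psi'_mul_le {A B : Set Ω} (hAm : MeasurableSet[mA] A)
    (hBm : MeasurableSet[mB] B) :
    ENNReal.ofReal (psi' μ mA mB) * μ A * μ B ≤ μ (A ∩ B) := by
  rcases eq_or_ne (μ A) 0 with hA0 | hA0
  · simp [hA0]
  rcases eq_or_ne (μ B) 0 with hB0 | hB0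
  · simp [hB0]
  have hApos : 0 < μ A := pos_iff_ne_zero.mpr hA0
  have hBpos : 0 < μ B := pos_iff_ne_zero.mpr hB0
  have hAfin : μ A ≠ ⊤ := measure_ne_top μ A
  have hBfin : μ B ≠ ⊤ := measure_ne_top μ B
  have hAtr : 0 < (μ A).toReal := ENNReal.toReal_pos hA0 hAfin
  have hBtr : 0 < (μ B).toReal := ENNReal.toReal_pos hB0 hBfin
  have hmem : (μ (A ∩ B)).toReal / ((μ A).toReal * (μ B).toReal) ∈
      {r | ∃ A B, MeasurableSet[mA] A ∧ MeasurableSet[mB] B ∧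
        0 < μ A ∧ 0 < μ B ∧ r = (μ (A ∩ B)).toReal / ((μ A).toReal * (μ B).toReal)} :=
    ⟨A, B, hAm, hBm, hApos, hBpos, rfl⟩
  have hle : psi' μ mA mB ≤ (μ (A ∩ B)).toReal / ((μ A).toReal * (μ B).toReal) := by
    rw [psi']
    split
    case isTrue h =>
      apply csInf_le
      · refine ⟨0, ?_⟩
        rintro x ⟨A', B', _, _, _, _, rfl⟩
        positivity
      · exact hmem
    case isFalse h => exact absurd ⟨_, hmem⟩ h
  have hreal : psi' μ mA mB * ((μ A).toReal * (μ B).toReal) ≤ (μ (A ∩ B)).toReal := by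
    rw [← le_div_iff₀ (by positivity)]
    exact hle
  calc ENNReal.ofReal (psi' μ mA mB) * μ A * μ B
      = ENNReal.ofReal (psi' μ mA mB * ((μ A).toReal * (μ B).toReal)) := by
        rw [ENNReal.ofReal_mul (psi'_nonneg μ mA mB), ENNReal.ofReal_mul (by positivity),
          ENNReal.ofReal_toReal hAfin, ENNReal.ofReal_toReal hBfin, mul_assoc]
    _ ≤ ENNReal.ofReal (μ (A ∩ B)).toReal := ENNReal.ofReal_le_ofReal hreal
    _ = μ (A ∩ B) := ENNReal.ofReal_toReal (measure_ne_top μ _)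

variable {mA mB}

private lemma setIntegral_ge_aux (hA : mA ≤ m0) {c : ℝ} (hc0 : 0 ≤ c)
    (hstar : ∀ A B : Set Ω, MeasurableSet[mA] A → MeasurableSet[mB] B →
      ENNReal.ofReal c * μ A * μ B ≤ μ (A ∩ B))
    {f : Ω → ℝ}
    (hf : StronglyMeasurable[mA] f) (hint : Integrable f μ) (hpos : 0 ≤ᵐ[μ] f)
    {B : Set Ω} (hBm : MeasurableSet[mB] B) (hB : mB ≤ m0) :
    c * (μ B).toReal * ∫ x, f x ∂μ ≤ ∫ x in B, f x ∂μ := by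
  have hBm0 : MeasurableSet[m0] B := hB B hBm
  have hfm : Measurable[mA] fun ω => ENNReal.ofReal (f ω) :=
    (hf.measurable).ennreal_ofReal
  have hmle : (ENNReal.ofReal c * μ B) • (μ.trim hA) ≤ (μ.restrict B).trim hA := by
    refine Measure.le_iff.mpr fun s hs => ?_
    rw [Measure.smul_apply, smul_eq_mul, trim_measurableSet_eq hA hs,
      trim_measurableSet_eq hA hs, Measure.restrict_apply (hA s hs)]
    rw [mul_right_comm]
    exact hstar s B hs hBm
  have hlin : (ENNReal.ofReal c * μ B) * ∫⁻ ω, ENNReal.ofReal (f ω) ∂μ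
      ≤ ∫⁻ ω, ENNReal.ofReal (f ω) ∂(μ.restrict B) := by
    calc (ENNReal.ofReal c * μ B) * ∫⁻ ω, ENNReal.ofReal (f ω) ∂μ
        = (ENNReal.ofReal c * μ B) * ∫⁻ ω, ENNReal.ofReal (f ω) ∂(μ.trim hA) := by
          rw [lintegral_trim hA hfm]
      _ = ∫⁻ ω, ENNReal.ofReal (f ω) ∂((ENNReal.ofReal c * μ B) • (μ.trim hA)) := by
          rw [lintegral_smul_measure, smul_eq_mul]
      _ ≤ ∫⁻ ω, ENNReal.ofReal (f ω) ∂((μ.restrict B).trim hA) :=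
          lintegral_mono' hmle le_rfl
      _ = ∫⁻ ω, ENNReal.ofReal (f ω) ∂(μ.restrict B) := lintegral_trim hA hfm
  have haesm : AEStronglyMeasurable[m0] f μ := hint.1
  have hposB : 0 ≤ᵐ[μ.restrict B] f := ae_restrict_of_ae hpos
  have heq1 : ∫ x, f x ∂μ = (∫⁻ ω, ENNReal.ofReal (f ω) ∂μ).toReal :=
    integral_eq_lintegral_of_nonneg_ae hpos haesm
  have heq2 : ∫ x in B, f x ∂μ = (∫⁻ ω, ENNReal.ofReal (f ω) ∂(μ.restrict B)).toReal :=
    integral_eq_lintegral_of_nonneg_ae hposB (haesm.restrict)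
  have hfin : ∫⁻ ω, ENNReal.ofReal (f ω) ∂μ ≠ ⊤ := by
    have := hint.2
    rw [hasFiniteIntegral_iff_norm] at this
    refine ne_of_lt (lt_of_le_of_lt (lintegral_mono_ae ?_) this)
    filter_upwards [] with ω
    exact ENNReal.ofReal_le_ofReal (le_abs_self (f ω))
  have hfinB : ∫⁻ ω, ENNReal.ofReal (f ω) ∂(μ.restrict B) ≠ ⊤ := by
    refine ne_of_lt (lt_of_le_of_lt ?_ (lt_top_iff_ne_top.mpr hfin))
    exact lintegral_mono' Measure.restrict_le_self le_rfl
  rw [heq1, heq2]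
  have := ENNReal.toReal_mono hfinB hlin
  rw [ENNReal.toReal_mul, ENNReal.toReal_mul, ENNReal.toReal_ofReal hc0] at this
  linarith [this]

private lemma condexp_ge_aux (hA : mA ≤ m0) (hB : mB ≤ m0) {c : ℝ} (hc0 : 0 ≤ c)
    (hstar : ∀ A B : Set Ω, MeasurableSet[mA] A → MeasurableSet[mB] B →
      ENNReal.ofReal c * μ A * μ B ≤ μ (A ∩ B))
    {f : Ω → ℝ}
    (hf : StronglyMeasurable[mA] f) (hint : Integrable f μ) (hpos : 0 ≤ᵐ[μ] f) :
    ∀ᵐ ω ∂μ, c * ∫ x, f x ∂μ ≤ (μ[f|mB]) ω := by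
  haveI : SigmaFinite (μ.trim hB) := by
    have : IsFiniteMeasure (μ.trim hB) := isFiniteMeasure_trim hB
    infer_instance
  set g : Ω → ℝ := μ[f|mB] with hg
  set K : ℝ := c * ∫ x, f x ∂μ with hK
  set B₀ : Set Ω := {ω | g ω < K} with hB₀
  have hB₀m : MeasurableSet[mB] B₀ :=
    measurableSet_lt stronglyMeasurable_condExp.measurable measurable_const
  have hB₀m0 : MeasurableSet[m0] B₀ := hB B₀ hB₀m
  refine ae_iff.mpr ?_
  have hset : {a | ¬ K ≤ g a} = B₀ := by
    ext ω; simp [hB₀, not_le]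
  rw [hset]
  by_contra hμ
  have hμpos : 0 < μ B₀ := pos_iff_ne_zero.mpr hμ
  have h1 : ∫ x in B₀, g x ∂μ = ∫ x in B₀, f x ∂μ := setIntegral_condExp hB hint hB₀m
  have h2 : c * (μ B₀).toReal * ∫ x, f x ∂μ ≤ ∫ x in B₀, f x ∂μ :=
    setIntegral_ge_aux μ hA hc0 hstar hf hint hpos hB₀m hB
  have hgi : Integrable g (μ.restrict B₀) := integrable_condExp.restrict
  have hKi : Integrable (fun _ => K) (μ.restrict B₀) := integrable_const K
  have hφi : Integrable (fun ω => K - g ω) (μ.restrict B₀) := hKi.sub hgi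
  have hnn : 0 ≤ᵐ[μ.restrict B₀] fun ω => K - g ω := by
    filter_upwards [ae_restrict_mem hB₀m0] with ω hω
    have hlt : g ω < K := hω
    simp only [Pi.zero_apply]
    linarith
  have hφpos : 0 < ∫ x in B₀, (K - g x) ∂μ := by
    rw [show (∫ x in B₀, (K - g x) ∂μ) = ∫ x, (K - g x) ∂(μ.restrict B₀) from rfl,
      integral_pos_iff_support_of_nonneg_ae hnn hφi, Measure.restrict_apply' hB₀m0]
    refine lt_of_lt_of_le hμpos (measure_mono ?_)
    intro ω hω
    have hlt : g ω < K := hω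
    refine ⟨?_, hω⟩
    simp only [Function.mem_support]
    intro h0
    rw [sub_eq_zero] at h0
    exact absurd h0.symm (ne_of_lt hlt)
  have h3 : ∫ x in B₀, g x ∂μ < K * (μ B₀).toReal := by
    have hsub : ∫ x in B₀, (K - g x) ∂μ
        = K * (μ B₀).toReal - ∫ x in B₀, g x ∂μ := by
      rw [integral_sub hKi hgi]
      simp [smul_eq_mul, mul_comm, Measure.real]
    linarith
  rw [h1] at h3
  rw [hK] at h3
  nlinarith [h2, h3]

end Auxiliary

/-- If `ξ` is `𝒜`-measurable, in `L^p`, and has zero mean, then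
`‖E(ξ | ℬ)‖_p ≤ (1 - ψ'(𝒜, ℬ)) ‖ξ‖_p`. -/
theorem eLpNorm_condexp_le {Ω : Type*} {m0 : MeasurableSpace Ω}
    (μ : Measure Ω) [IsProbabilityMeasure μ]
    (mA mB : MeasurableSpace Ω) (hA : mA ≤ m0) (hB : mB ≤ m0)
    (p : ℝ≥0∞) (hp : 1 ≤ p) (ξ : Ω → ℝ)
    (hmeas : StronglyMeasurable[mA] ξ) (hmem : MemLp ξ p μ)
    (hmean : ∫ ω, ξ ω ∂μ = 0) :
    eLpNorm (μ[ξ|mB]) p μ ≤ ENNReal.ofReal (1 - psi' μ mA mB) * eLpNorm ξ p μ := by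
  haveI : SigmaFinite (μ.trim hB) := by
    have : IsFiniteMeasure (μ.trim hB) := isFiniteMeasure_trim hB
    infer_instance
  have hc0 : 0 ≤ psi' μ mA mB := psi'_nonneg μ mA mB
  have hc1 : psi' μ mA mB ≤ 1 := psi'_le_one μ mA mB
  set c₀ : ℝ := psi' μ mA mB with hc
  have hstar : ∀ A B : Set Ω, MeasurableSet[mA] A → MeasurableSet[mB] B →
      ENNReal.ofReal c₀ * μ A * μ B ≤ μ (A ∩ B) :=
    fun A B hAm hBm => psi'_mul_le μ mA mB hAm hBm
  set d : ℝ := 1 - c₀ with hd_def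
  have hd0 : 0 ≤ d := by rw [hd_def]; linarith
  have hint : Integrable ξ μ := hmem.integrable hp
  have hp0 : p ≠ 0 := by
    intro h; rw [h] at hp; exact absurd hp (by simp)
  set g : Ω → ℝ := μ[ξ|mB] with hg
  by_cases hptop : p = ∞
  · -- p = ∞
    subst hptop
    set M : ℝ := (eLpNorm ξ ∞ μ).toReal with hM
    have hMfin : eLpNorm ξ ∞ μ ≠ ∞ := hmem.2.ne
    have hMbd : ∀ᵐ ω ∂μ, |ξ ω| ≤ M := by
      filter_upwards [ae_le_eLpNormEssSup (f := ξ) (μ := μ)] with ω hω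
      have h1 : (‖ξ ω‖₊ : ℝ≥0∞) ≤ eLpNorm ξ ∞ μ := by
        rwa [eLpNorm_exponent_top]
      have h2 := ENNReal.toReal_mono hMfin h1
      simpa [Real.norm_eq_abs, hM] using h2
    have hM0 : 0 ≤ M := ENNReal.toReal_nonneg
    -- upper bound
    have hup : ∀ᵐ ω ∂μ, g ω ≤ d * M := by
      have hsm : StronglyMeasurable[mA] fun ω => M - ξ ω :=
        stronglyMeasurable_const.sub hmeas
      have hin : Integrable (fun ω => M - ξ ω) μ := (integrable_const M).sub hint
      have hpos : 0 ≤ᵐ[μ] fun ω => M - ξ ω := by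
        filter_upwards [hMbd] with ω hω
        have := (abs_le.mp hω).2
        simp only [Pi.zero_apply]
        linarith
      have hI : ∫ x, (M - ξ x) ∂μ = M := by
        rw [integral_sub (integrable_const M) hint, hmean, integral_const]
        simp [measure_univ]
      have hce : μ[(fun ω => M - ξ ω)|mB] =ᵐ[μ] fun ω => M - g ω := by
        have h1 := condExp_sub (μ := μ) (m := mB) (integrable_const M) hint
        refine h1.trans ?_
        rw [condExp_const hB M]
        filter_upwards [] with ω
        simp [hg]
      have hK := condexp_ge_aux μ hA hB hc0 hstar hsm hin hpos
      filter_upwards [hK, hce] with ω h1 h2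
      rw [h2, hI] at h1
      rw [hd_def]
      nlinarith
    have hlo : ∀ᵐ ω ∂μ, -(d * M) ≤ g ω := by
      have hsm : StronglyMeasurable[mA] fun ω => M + ξ ω :=
        stronglyMeasurable_const.add hmeas
      have hin : Integrable (fun ω => M + ξ ω) μ := (integrable_const M).add hint
      have hpos : 0 ≤ᵐ[μ] fun ω => M + ξ ω := by
        filter_upwards [hMbd] with ω hω
        have := (abs_le.mp hω).1
        simp only [Pi.zero_apply]
        linarith
      have hI : ∫ x, (M + ξ x) ∂μ = M := by
        rw [integral_add (integrable_const M) hint, hmean, integral_const]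
        simp [measure_univ]
      have hce : μ[(fun ω => M + ξ ω)|mB] =ᵐ[μ] fun ω => M + g ω := by
        have h1 := condExp_add (μ := μ) (m := mB) (integrable_const M) hint
        refine h1.trans ?_
        rw [condExp_const hB M]
        filter_upwards [] with ω
        simp [hg]
      have hK := condexp_ge_aux μ hA hB hc0 hstar hsm hin hpos
      filter_upwards [hK, hce] with ω h1 h2
      rw [h2, hI] at h1
      rw [hd_def]
      nlinarith
    have habs : ∀ᵐ ω ∂μ, ‖g ω‖ ≤ d * M := by
      filter_upwards [hup, hlo] with ω h1 h2
      rw [Real.norm_eq_abs, abs_le]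
      exact ⟨h2, h1⟩
    calc eLpNorm g ∞ μ = eLpNormEssSup g μ := eLpNorm_exponent_top
      _ ≤ ENNReal.ofReal (d * M) := eLpNormEssSup_le_of_ae_bound habs
      _ = ENNReal.ofReal d * ENNReal.ofReal M := ENNReal.ofReal_mul hd0
      _ ≤ ENNReal.ofReal d * eLpNorm ξ ∞ μ := by
          exact mul_le_mul_right ENNReal.ofReal_toReal_le _
  · -- p < ∞
    set r : ℝ := p.toReal with hr
    have hr1 : 1 ≤ r := by
      rw [hr, ← ENNReal.toReal_one]
      exact ENNReal.toReal_mono hptop hp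
    have hr0 : (0:ℝ) < r := lt_of_lt_of_le one_pos hr1
    set φξ : Ω → ℝ := fun ω => |ξ ω| ^ r with hφ
    have hφsm : StronglyMeasurable[mA] φξ := by
      have hcont : Continuous fun y : ℝ => |y| ^ r :=
        continuous_abs.rpow_const fun x => Or.inr hr0.le
      exact hcont.comp_stronglyMeasurable hmeas
    have hφint : Integrable φξ μ := by
      have := hmem.integrable_norm_rpow hp0 hptop
      simpa [Real.norm_eq_abs, hφ, hr] using this
    set I : ℝ := ∫ x, φξ x ∂μ with hI
    have hI0 : 0 ≤ I := integral_nonneg fun x => Real.rpow_nonneg (abs_nonneg _) _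
    set h : Ω → ℝ := μ[φξ|mB] with hh
    have hIF : ∫ ω, (h ω - c₀ * I) ∂μ = d * I := by
      rw [integral_sub integrable_condExp (integrable_const _), integral_condExp hB,
        integral_const]
      simp only [Measure.real, measure_univ, ENNReal.toReal_one, smul_eq_mul, one_mul]
      rw [hd_def]; ring
    have hFint : Integrable (fun ω => h ω - c₀ * I) μ :=
      integrable_condExp.sub (integrable_const _)
    -- key family of inequalities
    have key : ∀ σ : ℝ, σ = 1 ∨ σ = -1 → ∀ q : ℚ, ∀ᵐ ω ∂μ,
        r * |(q:ℝ)| ^ (r-1) * (σ * g ω) - d * ((r-1) * |(q:ℝ)| ^ r) ≤ h ω - c₀ * I := by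
      intro σ hσ q
      set τ : ℝ := |(q:ℝ)| with hτ
      have hτ0 : 0 ≤ τ := abs_nonneg _
      set s : ℝ := r * τ ^ (r-1) with hs
      have hs0 : 0 ≤ s := by
        rw [hs]; positivity
      have hsτ : s * τ = r * τ ^ r := by
        rcases eq_or_lt_of_le hτ0 with h0 | h0
        · rw [← h0, Real.zero_rpow (ne_of_gt hr0)]
          ring
        · rw [hs, mul_assoc, ← Real.rpow_add_one (ne_of_gt h0) (r-1)]
          ring_nf
      set f : Ω → ℝ := fun ω => φξ ω + ((-s * σ) * ξ ω + (s * τ - τ ^ r)) with hf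
      have hfpos : 0 ≤ᵐ[μ] f := by
        filter_upwards [] with ω
        have htan := tangent_le hr1 hτ0 (σ * ξ ω)
        have habs : |σ * ξ ω| = |ξ ω| := by
          rcases hσ with h'|h' <;> simp [h', abs_mul]
        rw [habs] at htan
        rw [← hs] at htan
        have hexp : s * (σ * ξ ω - τ) = s * σ * ξ ω - s * τ := by ring
        rw [hexp] at htan
        simp only [Pi.zero_apply, hf, hφ]
        linarith [htan]
      have hfsm : StronglyMeasurable[mA] f :=
        hφsm.add ((hmeas.const_mul _).add stronglyMeasurable_const)
      have hint1 : Integrable (fun ω => (-s * σ) * ξ ω) μ := hint.const_mul _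
      have hint2 : Integrable (fun _ : Ω => (s * τ - τ ^ r)) μ := integrable_const _
      have hint12 : Integrable (fun ω => (-s * σ) * ξ ω + (s * τ - τ ^ r)) μ :=
        hint1.add hint2
      have hfint : Integrable f μ := hφint.add hint12
      have hIf : ∫ x, f x ∂μ = I + (s * τ - τ ^ r) := by
        rw [hf, integral_add hφint hint12, integral_add hint1 hint2,
          integral_const_mul, hmean, integral_const]
        simp [measure_univ, hI]
      have hce : μ[f|mB] =ᵐ[μ] fun ω => h ω + ((-s * σ) * g ω + (s * τ - τ ^ r)) := by
        have hfe : f = φξ + ((-s * σ) • ξ + fun _ : Ω => (s * τ - τ ^ r)) := rfl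
        rw [hfe]
        have hX : Integrable ((-s * σ) • ξ + fun _ : Ω => (s * τ - τ ^ r)) μ :=
          (hint.smul (-s * σ)).add (integrable_const _)
        have h1 := condExp_add (μ := μ) (m := mB) (f := φξ)
          (g := (-s * σ) • ξ + fun _ : Ω => (s * τ - τ ^ r)) hφint hX
        have h2 := condExp_add (μ := μ) (m := mB) (f := (-s * σ) • ξ)
          (g := fun _ : Ω => (s * τ - τ ^ r)) (hint.smul (-s * σ)) (integrable_const _)
        have h3 := condExp_smul (μ := μ) (m := mB) (-s * σ) ξ
        have h4 := condExp_const (μ := μ) hB (s * τ - τ ^ r)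
        filter_upwards [h1, h2, h3] with ω e1 e2 e3
        rw [e1]
        simp only [Pi.add_apply]
        rw [e2]
        simp only [Pi.add_apply]
        rw [h4, e3]
        simp [smul_eq_mul, hg, hh]
      have hK := condexp_ge_aux μ hA hB hc0 hstar hfsm hfint hfpos
      filter_upwards [hK, hce] with ω h1 h2
      rw [h2, hIf] at h1
      have e1 : c₀ * (I + (s * τ - τ ^ r)) = c₀ * I + c₀ * (s * τ) - c₀ * τ ^ r := by ring
      have e2 : (-s * σ) * g ω = -(s * (σ * g ω)) := by ring
      have e3 : d * ((r-1) * τ ^ r) = (s * τ - τ ^ r) - c₀ * (s * τ) + c₀ * τ ^ r := by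
        have : (r - 1) * τ ^ r = s * τ - τ ^ r := by rw [hsτ]; ring
        rw [this, hd_def]; ring
      rw [e2] at h1
      rw [e3]
      linarith [h1, e1]
    have k1 := key 1 (Or.inl rfl)
    have k2 := key (-1) (Or.inr rfl)
    have hall : ∀ᵐ ω ∂μ, ∀ q : ℚ,
        (r * |(q:ℝ)| ^ (r-1) * (1 * g ω) - d * ((r-1) * |(q:ℝ)| ^ r) ≤ h ω - c₀ * I) ∧
        (r * |(q:ℝ)| ^ (r-1) * (-1 * g ω) - d * ((r-1) * |(q:ℝ)| ^ r) ≤ h ω - c₀ * I) := by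
      rw [ae_all_iff]
      intro q
      exact (k1 q).and (k2 q)
    have habs : ∀ᵐ ω ∂μ, ∀ q : ℚ, 0 ≤ (q:ℝ) →
        r * (q:ℝ) ^ (r-1) * |g ω| - d * ((r-1) * (q:ℝ) ^ r) ≤ h ω - c₀ * I := by
      filter_upwards [hall] with ω hω q hq
      have hτ : |(q:ℝ)| = (q:ℝ) := abs_of_nonneg hq
      rcases le_or_gt 0 (g ω) with hgω | hgω
      · have := (hω q).1
        rw [hτ, one_mul] at this
        rwa [abs_of_nonneg hgω]
      · have := (hω q).2
        rw [hτ] at this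
        rw [abs_of_neg hgω]
        convert this using 3
        ring
    rcases eq_or_lt_of_le hd0 with hd | hd
    · -- d = 0
      have hrg : ∀ᵐ ω ∂μ, r * |g ω| ≤ h ω - c₀ * I := by
        filter_upwards [habs] with ω hω
        have := hω 1 (by norm_num)
        simpa [← hd, Real.one_rpow] using this
      have hF0 : 0 ≤ᵐ[μ] fun ω => h ω - c₀ * I := by
        filter_upwards [hrg] with ω hω
        have : 0 ≤ r * |g ω| := by positivity
        simp only [Pi.zero_apply]
        linarith
      have hFz : (fun ω => h ω - c₀ * I) =ᵐ[μ] 0 := by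
        refine (integral_eq_zero_iff_of_nonneg_ae hF0 hFint).mp ?_
        rw [hIF, ← hd, zero_mul]
      have hg0 : g =ᵐ[μ] 0 := by
        filter_upwards [hrg, hFz] with ω h1 h2
        simp only [Pi.zero_apply] at h2 ⊢
        rw [h2] at h1
        have habs0 : |g ω| = 0 := le_antisymm (by nlinarith [abs_nonneg (g ω)]) (abs_nonneg _)
        exact abs_eq_zero.mp habs0
      rw [eLpNorm_congr_ae hg0, eLpNorm_zero]
      exact zero_le
    · -- d > 0
      have hptw : ∀ᵐ ω ∂μ, |g ω| ^ r ≤ d ^ (r-1) * (h ω - c₀ * I) := by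
        filter_upwards [habs] with ω hω
        exact pointwise_jensen hr1 hd (abs_nonneg _) fun q hq => hω q hq
      set R : Ω → ℝ := fun ω => d ^ (r-1) * (h ω - c₀ * I) with hR
      have hRint : Integrable R μ := hFint.const_mul _
      have hRnn : 0 ≤ᵐ[μ] R := by
        filter_upwards [hptw] with ω hω
        have h0 : (0:ℝ) ≤ |g ω| ^ r := Real.rpow_nonneg (abs_nonneg _) _
        simp only [Pi.zero_apply, hR]
        linarith
      have hRI : ∫ ω, R ω ∂μ = d ^ r * I := by
        rw [hR, integral_const_mul, hIF, ← mul_assoc, ← Real.rpow_add_one (ne_of_gt hd),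
          sub_add_cancel]
      have hnorm : ∀ x : ℝ, ((‖x‖₊ : ℝ≥0∞)) ^ r = ENNReal.ofReal (|x| ^ r) := fun x => by
        rw [← (by exact ofReal_norm x : ENNReal.ofReal ‖x‖ = (‖x‖₊ : ℝ≥0∞)), ENNReal.ofReal_rpow_of_nonneg (norm_nonneg x) hr0.le,
          Real.norm_eq_abs]
      have hξnorm : ∫⁻ ω, ((‖ξ ω‖₊ : ℝ≥0∞)) ^ r ∂μ = ENNReal.ofReal I := by
        have : ∀ᵐ ω ∂μ, ((‖ξ ω‖₊ : ℝ≥0∞)) ^ r = ENNReal.ofReal (φξ ω) := by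
          filter_upwards [] with ω
          rw [hnorm]
        rw [lintegral_congr_ae this,
          ← ofReal_integral_eq_lintegral_ofReal hφint
            (Filter.Eventually.of_forall fun ω => by positivity)]
      calc eLpNorm g p μ
          = (∫⁻ ω, ((‖g ω‖₊ : ℝ≥0∞)) ^ r ∂μ) ^ (1/r) :=
            eLpNorm_eq_lintegral_rpow_enorm_toReal hp0 hptop
        _ ≤ (ENNReal.ofReal (d ^ r * I)) ^ (1/r) := by
            refine ENNReal.rpow_le_rpow ?_ (by positivity)
            calc ∫⁻ ω, ((‖g ω‖₊ : ℝ≥0∞)) ^ r ∂μ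
                = ∫⁻ ω, ENNReal.ofReal (|g ω| ^ r) ∂μ := by
                  refine lintegral_congr fun ω => ?_
                  rw [hnorm]
              _ ≤ ∫⁻ ω, ENNReal.ofReal (R ω) ∂μ :=
                  lintegral_mono_ae (hptw.mono fun ω hω => ENNReal.ofReal_le_ofReal hω)
              _ = ENNReal.ofReal (∫ ω, R ω ∂μ) :=
                  (ofReal_integral_eq_lintegral_ofReal hRint hRnn).symm
              _ = ENNReal.ofReal (d ^ r * I) := by rw [hRI]
        _ = ENNReal.ofReal d * (ENNReal.ofReal I) ^ (1/r) := by
            rw [ENNReal.ofReal_mul (by positivity : (0:ℝ) ≤ d ^ r),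
              ENNReal.mul_rpow_of_nonneg _ _ (by positivity : (0:ℝ) ≤ 1/r)]
            congr 1
            rw [← ENNReal.ofReal_rpow_of_nonneg hd.le hr0.le, ← ENNReal.rpow_mul,
              mul_one_div_cancel (ne_of_gt hr0), ENNReal.rpow_one]
        _ ≤ ENNReal.ofReal d * eLpNorm ξ p μ := by
            refine mul_le_mul_right (le_of_eq ?_) _
            rw [← hξnorm]; exact (eLpNorm_eq_lintegral_rpow_enorm_toReal (f := ξ) (μ := μ) hp0 hptop).symm
end

section
/- Let (Ω, F, μ) be a probability space, A, B sub-σ-algebras, c = ψ'(A,B), p, q ∈ [1,∞] conjugate exponents (1/p + 1/q = 1). If ξ is A-measurable with ξ ∈ L^p and Eξ = 0, and η is B-measurable with η ∈ L^q, then |E(ξη)| ≤ (1 - c)‖ξ‖_p‖η‖_q. -/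
open MeasureTheory Set
open scoped ENNReal symmDiff

namespace PsiProofAux

section DUsec

variable {α β : Type*}

/-- finite disjoint unions of measurable rectangles -/
def DU (mA : MeasurableSpace α) (mB : MeasurableSpace β) : Set (Set (α × β)) :=
  {S | ∃ (ι : Type) (_ : Fintype ι) (f : ι → Set α × Set β),
    (∀ i, MeasurableSet[mA] (f i).1) ∧ (∀ i, MeasurableSet[mB] (f i).2) ∧
    (∀ i j, i ≠ j → Disjoint ((f i).1 ×ˢ (f i).2) ((f j).1 ×ˢ (f j).2)) ∧
    S = ⋃ i, (f i).1 ×ˢ (f i).2}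

variable {mA : MeasurableSpace α} {mB : MeasurableSpace β}

lemma DU.empty : (∅ : Set (α × β)) ∈ DU mA mB :=
  ⟨PEmpty, inferInstance, fun i => i.elim, fun i => i.elim,
    fun i => i.elim, fun i j _ => i.elim, by simp⟩

lemma DU.rect {A : Set α} {B : Set β} (hA : MeasurableSet[mA] A) (hB : MeasurableSet[mB] B) :
    (A ×ˢ B) ∈ DU mA mB :=
  ⟨PUnit, inferInstance, fun _ => (A, B), fun _ => hA, fun _ => hB,
    fun i j hij => absurd (Subsingleton.elim i j) hij, (Set.iUnion_const _).symm⟩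

lemma DU.inter {S T : Set (α × β)} (hS : S ∈ DU mA mB) (hT : T ∈ DU mA mB) :
    S ∩ T ∈ DU mA mB := by
  obtain ⟨ι, hι, f, hf1, hf2, hdis, rfl⟩ := hS
  obtain ⟨ι', hι', g, hg1, hg2, hdis', rfl⟩ := hT
  refine ⟨ι × ι', inferInstance,
    fun p => ((f p.1).1 ∩ (g p.2).1, (f p.1).2 ∩ (g p.2).2),
    fun p => (hf1 p.1).inter (hg1 p.2), fun p => (hf2 p.1).inter (hg2 p.2), ?_, ?_⟩
  · rintro ⟨i, i'⟩ ⟨j, j'⟩ hij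
    by_cases h : i = j
    · subst h
      have hne : i' ≠ j' := fun h' => hij (by simp [h'])
      exact (hdis' i' j' hne).mono
        (Set.prod_mono inter_subset_right inter_subset_right)
        (Set.prod_mono inter_subset_right inter_subset_right)
    · exact (hdis i j h).mono
        (Set.prod_mono inter_subset_left inter_subset_left)
        (Set.prod_mono inter_subset_left inter_subset_left)
  · ext z
    simp only [mem_inter_iff, mem_iUnion, mem_prod, mem_inter_iff, Prod.exists]
    constructor
    · rintro ⟨⟨i, hi1, hi2⟩, ⟨j, hj1, hj2⟩⟩
      exact ⟨i, j, ⟨hi1, hj1⟩, hi2, hj2⟩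
    · rintro ⟨i, j, ⟨hi1, hj1⟩, hi2, hj2⟩
      exact ⟨⟨i, hi1, hi2⟩, ⟨j, hj1, hj2⟩⟩

lemma DU.compl {S : Set (α × β)} (hS : S ∈ DU mA mB) : Sᶜ ∈ DU mA mB := by
  classical
  obtain ⟨ι, hι, f, hf1, hf2, hdis, rfl⟩ := hS
  let C1 : ι → Bool → Set α := fun i b => cond b (((f i).1)ᶜ) ((f i).1)
  let C2 : ι → Bool → Set β := fun i b => cond b univ (((f i).2)ᶜ)
  refine ⟨ι → Bool, inferInstance,
    fun b => (⋂ i, C1 i (b i), ⋂ i, C2 i (b i)), ?_, ?_, ?_, ?_⟩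
  · intro b
    refine MeasurableSet.iInter fun i => ?_
    cases hb : b i
    · simpa only [C1, hb, Bool.cond_false] using hf1 i
    · simpa only [C1, hb, Bool.cond_true] using (hf1 i).compl
  · intro b
    refine MeasurableSet.iInter fun i => ?_
    cases hb : b i
    · simpa only [C2, hb, Bool.cond_false] using (hf2 i).compl
    · simpa only [C2, hb, Bool.cond_true] using MeasurableSet.univ
  · intro b b' hbb'
    have hex : ∃ i, b i ≠ b' i := by
      by_contra h
      push_neg at h
      exact hbb' (funext h)
    obtain ⟨i, hi⟩ := hex
    refine Set.disjoint_left.2 fun z hz hz' => ?_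
    have h1 : z.1 ∈ C1 i (b i) := by
      have := hz.1; rw [mem_iInter] at this; exact this i
    have h2 : z.1 ∈ C1 i (b' i) := by
      have := hz'.1; rw [mem_iInter] at this; exact this i
    cases hb : b i <;> cases hb' : b' i
    · exact hi (by rw [hb, hb'])
    · rw [hb] at h1; rw [hb'] at h2
      simp only [C1, Bool.cond_false, Bool.cond_true, mem_compl_iff] at h1 h2
      exact h2 h1
    · rw [hb] at h1; rw [hb'] at h2
      simp only [C1, Bool.cond_false, Bool.cond_true, mem_compl_iff] at h1 h2
      exact h1 h2
    · exact hi (by rw [hb, hb'])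
  · ext z
    constructor
    · intro hz
      rw [mem_compl_iff, mem_iUnion] at hz
      push_neg at hz
      rw [mem_iUnion]
      refine ⟨fun i => if z.1 ∈ (f i).1 then false else true, ?_⟩
      rw [mem_prod, mem_iInter, mem_iInter]
      constructor <;> intro i
      · by_cases h : z.1 ∈ (f i).1
        · simp only [C1, if_pos h, Bool.cond_false]; exact h
        · simp only [C1, if_neg h, Bool.cond_true]; exact h
      · by_cases h : z.1 ∈ (f i).1
        · simp only [C2, if_pos h, Bool.cond_false, mem_compl_iff]
          intro h2
          exact hz i ⟨h, h2⟩
        · simp only [C2, if_neg h, Bool.cond_true]; trivial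
    · intro hz
      rw [mem_iUnion] at hz
      obtain ⟨b, hb⟩ := hz
      rw [mem_prod, mem_iInter, mem_iInter] at hb
      rw [mem_compl_iff, mem_iUnion]
      push_neg
      intro i hmem
      rw [mem_prod] at hmem
      have h1 := hb.1 i
      have h2 := hb.2 i
      cases hbi : b i
      · rw [hbi] at h2
        simp only [C2, Bool.cond_false, mem_compl_iff] at h2
        exact h2 hmem.2
      · rw [hbi] at h1
        simp only [C1, Bool.cond_true, mem_compl_iff] at h1
        exact h1 hmem.1

lemma DU.union {S T : Set (α × β)} (hS : S ∈ DU mA mB) (hT : T ∈ DU mA mB) :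
    S ∪ T ∈ DU mA mB := by
  have h : S ∪ T = (Sᶜ ∩ Tᶜ)ᶜ := by rw [← Set.compl_union, compl_compl]
  rw [h]
  exact DU.compl (DU.inter (DU.compl hS) (DU.compl hT))

lemma DU.isSetAlgebra : IsSetAlgebra (DU mA mB) :=
  ⟨DU.empty, fun _ h => DU.compl h, fun _ _ h h' => DU.union h h'⟩

lemma DU.measurableSet {S : Set (α × β)} (hS : S ∈ DU mA mB) :
    MeasurableSet[mA.prod mB] S := by
  obtain ⟨ι, hι, f, hf1, hf2, hdis, rfl⟩ := hS
  letI : MeasurableSpace (α × β) := mA.prod mB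
  exact MeasurableSet.iUnion fun i => (hf1 i).prod (hf2 i)



end DUsec

/-- Extend an inequality `k·P ≤ ν` from a generating set algebra to all measurable sets,
using measure-dense approximation. -/
lemma le_of_isSetAlgebra {α : Type*} {mα : MeasurableSpace α}
    (ν P : Measure α) [IsFiniteMeasure ν] [IsFiniteMeasure P]
    (k : ℝ≥0∞) (hk : k ≤ 1) (𝒜 : Set (Set α)) (halg : IsSetAlgebra 𝒜)
    (hgen : mα = MeasurableSpace.generateFrom 𝒜)
    (hle : ∀ T ∈ 𝒜, k * P T ≤ ν T) :
    ∀ S, MeasurableSet S → k * P S ≤ ν S := by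
  intro S hS
  set m : Measure α := ν + P with hm
  have hdense : m.MeasureDense 𝒜 :=
    Measure.MeasureDense.of_generateFrom_isSetAlgebra_finite m halg hgen
  refine ENNReal.le_of_forall_pos_le_add fun ε hε _ => ?_
  obtain ⟨T, hT, hmT⟩ := hdense.approx S hS (measure_ne_top m S) ε (by exact_mod_cast hε)
  rw [ENNReal.ofReal_coe_nnreal] at hmT
  have hPS : P S ≤ P T + P (S ∆ T) := by
    refine le_trans (measure_mono ?_) (measure_union_le _ _)
    intro x hx
    by_cases h : x ∈ T
    · exact Or.inl h
    · exact Or.inr (Or.inl ⟨hx, h⟩)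
  have hνT : ν T ≤ ν S + ν (S ∆ T) := by
    refine le_trans (measure_mono ?_) (measure_union_le _ _)
    intro x hx
    by_cases h : x ∈ S
    · exact Or.inl h
    · exact Or.inr (Or.inr ⟨hx, h⟩)
  calc k * P S ≤ k * P T + k * P (S ∆ T) := by
        rw [← mul_add]; exact mul_le_mul_right hPS k
    _ ≤ ν T + P (S ∆ T) := by
        refine add_le_add (hle T hT) ?_
        calc k * P (S ∆ T) ≤ 1 * P (S ∆ T) := mul_le_mul_left hk _
          _ = P (S ∆ T) := one_mul _
    _ ≤ (ν S + ν (S ∆ T)) + P (S ∆ T) := add_le_add_left hνT _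
    _ = ν S + m (S ∆ T) := by rw [hm, Measure.add_apply, add_assoc]
    _ ≤ ν S + ε := add_le_add_right hmT.le _

def psiS {Ω : Type*} {m0 : MeasurableSpace Ω} (μ : Measure Ω)
    (mA mB : MeasurableSpace Ω) : Set ℝ :=
  {r | ∃ A B, MeasurableSet[mA] A ∧ MeasurableSet[mB] B ∧
    0 < μ A ∧ 0 < μ B ∧ r = (μ (A ∩ B)).toReal / ((μ A).toReal * (μ B).toReal)}

section PsiFacts

variable {Ω : Type*} {m0 : MeasurableSpace Ω} (μ : Measure Ω) [IsProbabilityMeasure μ]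
  (mA mB : MeasurableSpace Ω)

lemma one_mem_psiS : (1 : ℝ) ∈ psiS μ mA mB := by
  refine ⟨univ, univ, MeasurableSet.univ, MeasurableSet.univ, ?_, ?_, ?_⟩
  · simp
  · simp
  · simp

lemma psiS_bddBelow : BddBelow (psiS μ mA mB) := by
  refine ⟨0, fun r hr => ?_⟩
  obtain ⟨A, B, _, _, _, _, rfl⟩ := hr
  positivity

lemma psi'_eq : psi' μ mA mB = sInf (psiS μ mA mB) := by
  rw [psi']
  exact if_pos ⟨1, one_mem_psiS μ mA mB⟩

lemma psi'_nonneg : 0 ≤ psi' μ mA mB := by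
  rw [psi'_eq]
  refine le_csInf ⟨1, one_mem_psiS μ mA mB⟩ fun r hr => ?_
  obtain ⟨A, B, _, _, _, _, rfl⟩ := hr
  positivity

lemma psi'_le_one : psi' μ mA mB ≤ 1 := by
  rw [psi'_eq]
  exact csInf_le (psiS_bddBelow μ mA mB) (one_mem_psiS μ mA mB)

lemma psi'_rect (A B : Set Ω) (hA : MeasurableSet[mA] A) (hB : MeasurableSet[mB] B) :
    ENNReal.ofReal (psi' μ mA mB) * (μ A * μ B) ≤ μ (A ∩ B) := by
  rcases eq_or_lt_of_le (zero_le : 0 ≤ μ A) with h0A | h0A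
  · rw [← h0A]; simp
  rcases eq_or_lt_of_le (zero_le : 0 ≤ μ B) with h0B | h0B
  · rw [← h0B]; simp
  set r := (μ (A ∩ B)).toReal / ((μ A).toReal * (μ B).toReal) with hr
  have hmem : r ∈ psiS μ mA mB := ⟨A, B, hA, hB, h0A, h0B, rfl⟩
  have hle : psi' μ mA mB ≤ r := by
    rw [psi'_eq]
    exact csInf_le (psiS_bddBelow μ mA mB) hmem
  have haf : μ A ≠ ∞ := measure_ne_top μ A
  have hbf : μ B ≠ ∞ := measure_ne_top μ B
  have ha0 : 0 < (μ A).toReal := ENNReal.toReal_pos h0A.ne' haf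
  have hb0 : 0 < (μ B).toReal := ENNReal.toReal_pos h0B.ne' hbf
  calc ENNReal.ofReal (psi' μ mA mB) * (μ A * μ B)
      ≤ ENNReal.ofReal r * (μ A * μ B) :=
        mul_le_mul_left (ENNReal.ofReal_le_ofReal hle) _
    _ = ENNReal.ofReal r * (ENNReal.ofReal (μ A).toReal * ENNReal.ofReal (μ B).toReal) := by
        rw [ENNReal.ofReal_toReal haf, ENNReal.ofReal_toReal hbf]
    _ = ENNReal.ofReal (r * ((μ A).toReal * (μ B).toReal)) := by
        rw [ENNReal.ofReal_mul (by positivity), ENNReal.ofReal_mul (by positivity)]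
    _ = ENNReal.ofReal (μ (A ∩ B)).toReal := by
        congr 1
        rw [hr]
        field_simp
    _ = μ (A ∩ B) := ENNReal.ofReal_toReal (measure_ne_top μ _)

end PsiFacts


section Side

/-- If `κ + c' • m = m`, then the `L^r` seminorm w.r.t. `κ` is controlled by
`(1-c')^(1/r)` times the one w.r.t. `m`. -/
lemma eLpNorm_le_of_add_smul {γ : Type*} [MeasurableSpace γ] (κ m : Measure γ)
    (c' : ℝ≥0∞) (hc'1 : c' ≤ 1) (hκ : κ + c' • m = m) (g : γ → ℝ) (r : ℝ≥0∞)
    (hr : 1 ≤ r) (hmem : MemLp g r m) :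
    eLpNorm g r κ ≤ (1 - c') ^ (r.toReal⁻¹) * eLpNorm g r m := by
  have hκle : κ ≤ m := hκ ▸ Measure.le_add_right (le_refl κ)
  by_cases hrtop : r = ∞
  · subst hrtop
    simp only [ENNReal.toReal_top, inv_zero, ENNReal.rpow_zero, one_mul]
    exact eLpNorm_mono_measure g hκle
  have hr0 : r ≠ 0 := (lt_of_lt_of_le zero_lt_one hr).ne'
  set rt := r.toReal with hrt
  have hrt0 : 0 < rt := ENNReal.toReal_pos hr0 hrtop
  set t := ∫⁻ x, (‖g x‖₊ : ℝ≥0∞) ^ rt ∂m with ht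
  set s := ∫⁻ x, (‖g x‖₊ : ℝ≥0∞) ^ rt ∂κ with hs
  have htlt : t < ∞ := by
    rw [ht]
    exact lintegral_rpow_enorm_lt_top_of_eLpNorm_lt_top hr0 hrtop hmem.2
  have hct : c' * t ≠ ∞ := ENNReal.mul_ne_top (lt_of_le_of_lt hc'1 ENNReal.one_lt_top).ne htlt.ne
  have hsum : s + c' * t = t := by
    have h := congrArg (fun ρ : Measure γ => ∫⁻ x, (‖g x‖₊ : ℝ≥0∞) ^ rt ∂ρ) hκ
    simpa only [lintegral_add_measure, lintegral_smul_measure, smul_eq_mul] using h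
  have hseq : s = (1 - c') * t := by
    have h1 : s = t - c' * t := ENNReal.eq_sub_of_add_eq hct hsum
    rw [h1, ENNReal.sub_mul (fun _ _ => htlt.ne), one_mul]
  rw [eLpNorm_eq_lintegral_rpow_enorm_toReal hr0 hrtop, eLpNorm_eq_lintegral_rpow_enorm_toReal hr0 hrtop]
  simp only [enorm_eq_nnnorm]
  rw [← hrt, ← hs, ← ht, hseq, one_div,
    ENNReal.mul_rpow_of_nonneg _ _ (inv_nonneg.2 hrt0.le)]

end Side

section Main

variable {Z α β : Type*} [mZ : MeasurableSpace Z] [mα : MeasurableSpace α]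
  [mβ : MeasurableSpace β]

theorem aux_main (μ : Measure Z) [IsProbabilityMeasure μ] {F : Z → α} {G : Z → β}
    (hF : Measurable F) (hG : Measurable G)
    (c : ℝ) (hc0 : 0 ≤ c) (hc1 : c ≤ 1)
    (hrect : ∀ A B, MeasurableSet A → MeasurableSet B →
      ENNReal.ofReal c * (μ (F ⁻¹' A) * μ (G ⁻¹' B)) ≤ μ (F ⁻¹' A ∩ G ⁻¹' B))
    (p q : ℝ≥0∞) (hp : 1 ≤ p) (hq : 1 ≤ q) (hpq : p⁻¹ + q⁻¹ = 1)
    (ξ₀ : α → ℝ) (η₀ : β → ℝ) (hξ₀ : StronglyMeasurable ξ₀) (hη₀ : StronglyMeasurable η₀)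
    (hξmem : MemLp (fun z => ξ₀ (F z)) p μ) (hmean : ∫ z, ξ₀ (F z) ∂μ = 0)
    (hηmem : MemLp (fun z => η₀ (G z)) q μ) :
    ENNReal.ofReal |∫ z, ξ₀ (F z) * η₀ (G z) ∂μ| ≤
      ENNReal.ofReal (1 - c) * eLpNorm (fun z => ξ₀ (F z)) p μ *
        eLpNorm (fun z => η₀ (G z)) q μ := by
  classical
  set c' := ENNReal.ofReal c with hc'
  have hc'1 : c' ≤ 1 := ENNReal.ofReal_le_one.2 hc1
  have hd : ENNReal.ofReal (1 - c) = 1 - c' := by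
    rw [hc', ENNReal.ofReal_sub 1 hc0, ENNReal.ofReal_one]
  set d := (1 : ℝ≥0∞) - c' with hdd
  -- basic measures
  set φ : Z → α × β := fun z => (F z, G z) with hφdef
  have hφ : Measurable φ := hF.prodMk hG
  set να : Measure α := μ.map F with hνα
  set νβ : Measure β := μ.map G with hνβ
  haveI : IsProbabilityMeasure να := Measure.isProbabilityMeasure_map hF.aemeasurable
  haveI : IsProbabilityMeasure νβ := Measure.isProbabilityMeasure_map hG.aemeasurable
  set ν : Measure (α × β) := μ.map φ with hν
  haveI : IsProbabilityMeasure ν := Measure.isProbabilityMeasure_map hφ.aemeasurable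
  set P : Measure (α × β) := να.prod νβ with hP
  haveI : IsProbabilityMeasure P := by rw [hP]; infer_instance
  -- rectangle bound for the product measures
  have hrect' : ∀ A B, MeasurableSet A → MeasurableSet B →
      c' * P (A ×ˢ B) ≤ ν (A ×ˢ B) := by
    intro A B hAm hBm
    rw [hP, Measure.prod_prod, hνα, hνβ, Measure.map_apply hF hAm, Measure.map_apply hG hBm,
      hν, Measure.map_apply hφ (hAm.prod hBm)]
    have hpre : φ ⁻¹' (A ×ˢ B) = F ⁻¹' A ∩ G ⁻¹' B := rfl
    rw [hpre]
    exact hrect A B hAm hBm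
  -- bound on the algebra of disjoint unions of rectangles
  have hDU : ∀ T ∈ DU mα mβ, c' * P T ≤ ν T := by
    rintro T ⟨ι, hι, f, hf1, hf2, hdis, rfl⟩
    have hmeas : ∀ i, MeasurableSet ((f i).1 ×ˢ (f i).2) :=
      fun i => (hf1 i).prod (hf2 i)
    have hpair : Pairwise (Function.onFun Disjoint fun i => (f i).1 ×ˢ (f i).2) :=
      fun i j hij => hdis i j hij
    rw [measure_iUnion hpair hmeas, measure_iUnion hpair hmeas, ← ENNReal.tsum_mul_left]
    exact ENNReal.tsum_le_tsum fun i => hrect' _ _ (hf1 i) (hf2 i)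
  -- generating
  have hgen : (Prod.instMeasurableSpace : MeasurableSpace (α × β)) =
      MeasurableSpace.generateFrom (DU mα mβ) := by
    refine le_antisymm ?_ (MeasurableSpace.generateFrom_le fun S hS => DU.measurableSet hS)
    have h1 : (Prod.instMeasurableSpace : MeasurableSpace (α × β)) =
        MeasurableSpace.generateFrom
          (Set.image2 (· ×ˢ ·) {s : Set α | MeasurableSet s} {t : Set β | MeasurableSet t}) :=
      generateFrom_prod.symm
    rw [h1]
    refine MeasurableSpace.generateFrom_mono ?_
    rintro _ ⟨A, hA', B, hB', rfl⟩
    exact DU.rect hA' hB'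
  -- the key measure inequality
  have hkey : c' • P ≤ ν := by
    refine Measure.le_iff.2 fun S hS => ?_
    rw [Measure.smul_apply, smul_eq_mul]
    exact le_of_isSetAlgebra ν P c' hc'1 (DU mα mβ) DU.isSetAlgebra hgen hDU S hS
  -- decompose ν = λ + c' • P
  set lam : Measure (α × β) := ν - c' • P with hlam
  haveI : IsFiniteMeasure (c' • P) := by
    refine ⟨?_⟩
    rw [Measure.smul_apply, smul_eq_mul, measure_univ, mul_one]
    exact lt_of_le_of_lt hc'1 ENNReal.one_lt_top
  have hcan : lam + c' • P = ν := Measure.sub_add_cancel_of_le hkey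
  have hlamle : lam ≤ ν := Measure.sub_le
  -- the integrand on the product space
  set f : α × β → ℝ := fun w => ξ₀ w.1 * η₀ w.2 with hf
  have hfsm : StronglyMeasurable f :=
    (hξ₀.comp_measurable measurable_fst).mul (hη₀.comp_measurable measurable_snd)
  have hsm1 : StronglyMeasurable (fun w : α × β => ξ₀ w.1) :=
    hξ₀.comp_measurable measurable_fst
  have hsm2 : StronglyMeasurable (fun w : α × β => η₀ w.2) :=
    hη₀.comp_measurable measurable_snd
  have hsmul : (fun w : α × β => ξ₀ w.1) • (fun w : α × β => η₀ w.2) = f := rfl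
  have hpqr : 1 / (1 : ℝ≥0∞) = 1 / p + 1 / q := by
    simp only [one_div]
    rw [hpq, inv_one]
  -- Hölder with respect to any measure on the product
  have holder : ∀ τ : Measure (α × β), eLpNorm f 1 τ ≤
      eLpNorm (fun w : α × β => ξ₀ w.1) p τ * eLpNorm (fun w : α × β => η₀ w.2) q τ := by
    intro τ
    haveI : ENNReal.HolderTriple p q 1 := ENNReal.holderConjugate_iff.2 hpq
    have h := eLpNorm_smul_le_mul_eLpNorm (μ := τ) (p := p) (q := q) (r := 1) (f := fun w : α × β => η₀ w.2)
      (φ := fun w : α × β => ξ₀ w.1) hsm2.aestronglyMeasurable hsm1.aestronglyMeasurable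
    rwa [hsmul] at h
  -- eLpNorms over ν agree with those over μ
  have hmapξν : eLpNorm (fun w : α × β => ξ₀ w.1) p ν = eLpNorm (fun z => ξ₀ (F z)) p μ := by
    rw [hν, eLpNorm_map_measure hsm1.aestronglyMeasurable hφ.aemeasurable]
    rfl
  have hmapην : eLpNorm (fun w : α × β => η₀ w.2) q ν = eLpNorm (fun z => η₀ (G z)) q μ := by
    rw [hν, eLpNorm_map_measure hsm2.aestronglyMeasurable hφ.aemeasurable]
    rfl
  -- integrability of f with respect to ν
  have hfν : MemLp f 1 ν := by
    refine ⟨hfsm.aestronglyMeasurable, ?_⟩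
    refine lt_of_le_of_lt (holder ν) ?_
    rw [hmapξν, hmapην]
    exact ENNReal.mul_lt_top hξmem.2 hηmem.2
  have hIntν : Integrable f ν := memLp_one_iff_integrable.1 hfν
  have hIntlam : Integrable f lam := hIntν.mono_measure hlamle
  have hIntcP : Integrable f (c' • P) := hIntν.mono_measure hkey
  -- the integral over μ equals the integral over ν
  have hintν : ∫ z, ξ₀ (F z) * η₀ (G z) ∂μ = ∫ w, f w ∂ν := by
    rw [hν, integral_map hφ.aemeasurable hfsm.aestronglyMeasurable]
  -- the product part vanishes
  have hmeanα : ∫ x, ξ₀ x ∂να = 0 := by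
    rw [hνα, integral_map hF.aemeasurable hξ₀.aestronglyMeasurable]
    exact hmean
  have hintP : ∫ w, f w ∂P = 0 := by
    rw [hP, hf]
    rw [integral_prod_mul ξ₀ η₀]
    rw [hmeanα, zero_mul]
  have hintcP : ∫ w, f w ∂(c' • P) = 0 := by
    rw [integral_smul_measure, hintP, smul_zero]
  have hsplit : ∫ w, f w ∂ν = ∫ w, f w ∂lam := by
    have h := integral_add_measure hIntlam hIntcP
    rw [hcan] at h
    rw [h, hintcP, add_zero]
  -- marginals of lam
  have hmargα : lam.map Prod.fst + c' • να = να := by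
    have h := congrArg (fun ρ : Measure (α × β) => ρ.map Prod.fst) hcan
    simp only [Measure.map_add _ _ measurable_fst, Measure.map_smul] at h
    rw [Measure.map_fst_prod, measure_univ, one_smul] at h
    rwa [hν, Measure.map_map measurable_fst hφ] at h
  have hmargβ : lam.map Prod.snd + c' • νβ = νβ := by
    have h := congrArg (fun ρ : Measure (α × β) => ρ.map Prod.snd) hcan
    simp only [Measure.map_add _ _ measurable_snd, Measure.map_smul] at h
    rw [Measure.map_snd_prod, measure_univ, one_smul] at h
    rwa [hν, Measure.map_map measurable_snd hφ] at h
  -- memℒp on marginals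
  have hξνα : MemLp ξ₀ p να := by
    rw [hνα]
    exact (memLp_map_measure_iff hξ₀.aestronglyMeasurable hF.aemeasurable).2 hξmem
  have hηνβ : MemLp η₀ q νβ := by
    rw [hνβ]
    exact (memLp_map_measure_iff hη₀.aestronglyMeasurable hG.aemeasurable).2 hηmem
  -- eLpNorm bounds on lam
  have hξlam : eLpNorm (fun w : α × β => ξ₀ w.1) p lam ≤
      d ^ (p.toReal⁻¹) * eLpNorm (fun z => ξ₀ (F z)) p μ := by
    have h1 : eLpNorm (fun w : α × β => ξ₀ w.1) p lam = eLpNorm ξ₀ p (lam.map Prod.fst) :=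
      (eLpNorm_map_measure hξ₀.aestronglyMeasurable measurable_fst.aemeasurable).symm
    have h2 := eLpNorm_le_of_add_smul (lam.map Prod.fst) να c' hc'1 hmargα ξ₀ p hp hξνα
    have h3 : eLpNorm ξ₀ p να = eLpNorm (fun z => ξ₀ (F z)) p μ := by
      rw [hνα, eLpNorm_map_measure hξ₀.aestronglyMeasurable hF.aemeasurable]
      rfl
    rw [h1, ← h3]
    exact h2
  have hηlam : eLpNorm (fun w : α × β => η₀ w.2) q lam ≤
      d ^ (q.toReal⁻¹) * eLpNorm (fun z => η₀ (G z)) q μ := by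
    have h1 : eLpNorm (fun w : α × β => η₀ w.2) q lam = eLpNorm η₀ q (lam.map Prod.snd) :=
      (eLpNorm_map_measure hη₀.aestronglyMeasurable measurable_snd.aemeasurable).symm
    have h2 := eLpNorm_le_of_add_smul (lam.map Prod.snd) νβ c' hc'1 hmargβ η₀ q hq hηνβ
    have h3 : eLpNorm η₀ q νβ = eLpNorm (fun z => η₀ (G z)) q μ := by
      rw [hνβ, eLpNorm_map_measure hη₀.aestronglyMeasurable hG.aemeasurable]
      rfl
    rw [h1, ← h3]
    exact h2
  -- exponent arithmetic
  have hexp : p.toReal⁻¹ + q.toReal⁻¹ = 1 := by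
    by_cases hp' : p = ∞
    · have hq1 : q = 1 := by
        rw [hp', ENNReal.inv_top, zero_add] at hpq
        rwa [ENNReal.inv_eq_one] at hpq
      simp [hp', hq1]
    by_cases hq' : q = ∞
    · have hp1 : p = 1 := by
        rw [hq', ENNReal.inv_top, add_zero] at hpq
        rwa [ENNReal.inv_eq_one] at hpq
      simp [hq', hp1]
    have hp0 : p ≠ 0 := (lt_of_lt_of_le zero_lt_one hp).ne'
    have hq0 : q ≠ 0 := (lt_of_lt_of_le zero_lt_one hq).ne'
    have h := congrArg ENNReal.toReal hpq
    rwa [ENNReal.toReal_add (ENNReal.inv_ne_top.2 hp0) (ENNReal.inv_ne_top.2 hq0),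
      ENNReal.toReal_inv, ENNReal.toReal_inv, ENNReal.toReal_one] at h
  have hdmul : d ^ (p.toReal⁻¹) * d ^ (q.toReal⁻¹) = d := by
    rw [← ENNReal.rpow_add_of_nonneg _ _ (by positivity) (by positivity), hexp,
      ENNReal.rpow_one]
  -- main chain
  rw [hintν, hsplit]
  have step1 : ENNReal.ofReal |∫ w, f w ∂lam| ≤ eLpNorm f 1 lam := by
    rw [eLpNorm_one_eq_lintegral_enorm]
    have h := enorm_integral_le_lintegral_enorm (μ := lam) f
    rwa [Real.enorm_eq_ofReal_abs] at h
  refine le_trans step1 ?_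
  refine le_trans (holder lam) ?_
  refine le_trans (mul_le_mul' hξlam hηlam) ?_
  rw [hd]
  refine le_of_eq ?_
  calc d ^ p.toReal⁻¹ * eLpNorm (fun z => ξ₀ (F z)) p μ *
        (d ^ q.toReal⁻¹ * eLpNorm (fun z => η₀ (G z)) q μ)
      = (d ^ p.toReal⁻¹ * d ^ q.toReal⁻¹) *
          (eLpNorm (fun z => ξ₀ (F z)) p μ * eLpNorm (fun z => η₀ (G z)) q μ) := by ring
    _ = d * (eLpNorm (fun z => ξ₀ (F z)) p μ * eLpNorm (fun z => η₀ (G z)) q μ) := by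
        rw [hdmul]
    _ = d * eLpNorm (fun z => ξ₀ (F z)) p μ * eLpNorm (fun z => η₀ (G z)) q μ := by
        rw [mul_assoc]

end Main

end PsiProofAux

/-- If `ξ` is `𝒜`-measurable in `L^p` with zero mean and `η` is `ℬ`-measurable in `L^q`,
where `1/p + 1/q = 1`, then `|E(ξη)| ≤ (1 - ψ'(𝒜, ℬ)) ‖ξ‖_p ‖η‖_q`. -/
theorem abs_integral_mul_le {Ω : Type*} {m0 : MeasurableSpace Ω}
    (μ : Measure Ω) [IsProbabilityMeasure μ]
    (mA mB : MeasurableSpace Ω) (hA : mA ≤ m0) (hB : mB ≤ m0)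
    (p q : ℝ≥0∞) (hp : 1 ≤ p) (hq : 1 ≤ q) (hpq : p⁻¹ + q⁻¹ = 1)
    (ξ η : Ω → ℝ)
    (hξmeas : StronglyMeasurable[mA] ξ) (hξmem : MemLp ξ p μ)
    (hmean : ∫ ω, ξ ω ∂μ = 0)
    (hηmeas : StronglyMeasurable[mB] η) (hηmem : MemLp η q μ) :
    ENNReal.ofReal |∫ ω, ξ ω * η ω ∂μ| ≤
      ENNReal.ofReal (1 - psi' μ mA mB) * eLpNorm ξ p μ * eLpNorm η q μ := by
  have hc0 := PsiProofAux.psi'_nonneg μ mA mB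
  have hc1 := PsiProofAux.psi'_le_one μ mA mB
  have hrect : ∀ A B, MeasurableSet[mA] A → MeasurableSet[mB] B →
      ENNReal.ofReal (psi' μ mA mB) * (μ (id ⁻¹' A) * μ (id ⁻¹' B)) ≤
        μ (id ⁻¹' A ∩ id ⁻¹' B) := fun A B hAm hBm =>
    PsiProofAux.psi'_rect μ mA mB A B hAm hBm
  exact @PsiProofAux.aux_main Ω Ω Ω m0 mA mB μ inferInstance id id
    (measurable_id'' hA) (measurable_id'' hB) (psi' μ mA mB) hc0 hc1 hrect
    p q hp hq hpq ξ η hξmeas hηmeas hξmem hmean hηmem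
end
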